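/- arXiv:1310.2001 — 5 statements merged into one kernel-verified Lean document; each statement's English description precedes it below -/
import Mathlib

section
/- Let U be a finite code alphabet of size K ≥ 2 and let c : U → ℝ be a cost function with 0 < c(u) < ∞ for all u. Then there exists a unique positive real α (the cost capacity) such that ∑_{u ∈ U} K^{-α c(u)} = 1. -/
/-- Existence and uniqueness of the cost capacity. -/
theorem cost_capacity_exists_unique {U : Type*} [Fintype U] (K : ℕ) (hK : 2 ≤ K)
    (hcard : Fintype.card U = K) (c : U → ℝ) (hc : ∀ u, 0 < c u) :
    ∃! α : ℝ, 0 < α ∧ ∑ u : U, (K : ℝ) ^ (-(α * c u)) = 1 := by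
  have hK1 : (1:ℝ) < K := by exact_mod_cast lt_of_lt_of_le one_lt_two (by exact_mod_cast hK)
  have hK0 : (0:ℝ) < K := lt_trans one_pos hK1
  have hne : Nonempty U := by
    rw [← Fintype.card_pos_iff, hcard]; omega
  set f : ℝ → ℝ := fun α => ∑ u : U, (K : ℝ) ^ (-(α * c u)) with hf
  have hanti : StrictAnti f := by
    intro x y hxy
    apply Finset.sum_lt_sum_of_nonempty (Finset.univ_nonempty)
    intro u _
    apply Real.rpow_lt_rpow_left_iff hK1 |>.mpr
    have := hc u
    nlinarith
  have hcont : Continuous f := by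
    apply continuous_finset_sum
    intro u _
    have : (fun α : ℝ => (K : ℝ) ^ (-(α * c u))) =
        fun α : ℝ => Real.exp (Real.log K * (-(α * c u))) := by
      funext α
      rw [Real.rpow_def_of_pos hK0]
    rw [this]
    fun_prop
  -- value at 0
  have hf0 : f 0 = K := by
    simp [hf, hcard]
  -- pick m = min of c
  obtain ⟨u₀, hu₀⟩ := Finset.exists_min_image Finset.univ c Finset.univ_nonempty
  set m := c u₀ with hm
  have hm0 : 0 < m := hc u₀
  set A : ℝ := 2 / m with hA
  have hA0 : 0 < A := by positivity
  have hfA : f A < 1 := by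
    have hbound : ∀ u : U, (K : ℝ) ^ (-(A * c u)) ≤ (K : ℝ) ^ (-(A * m)) := by
      intro u
      apply Real.rpow_le_rpow_left_iff hK1 |>.mpr
      have := hu₀.2 u (Finset.mem_univ u)
      nlinarith
    calc f A ≤ ∑ _u : U, (K : ℝ) ^ (-(A * m)) :=
          Finset.sum_le_sum fun u _ => hbound u
      _ = K * (K : ℝ) ^ (-(A * m)) := by
          rw [Finset.sum_const, Finset.card_univ, hcard]; ring
      _ = (K : ℝ) ^ (1 + -(A * m)) := by
          rw [Real.rpow_add hK0, Real.rpow_one]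
      _ < (K : ℝ) ^ (0:ℝ) := by
          apply Real.rpow_lt_rpow_left_iff hK1 |>.mpr
          have : A * m = 2 := by rw [hA]; exact div_mul_cancel₀ 2 hm0.ne'
          rw [this]; norm_num
      _ = 1 := Real.rpow_zero _
  have h1f0 : (1:ℝ) < f 0 := by rw [hf0]; exact hK1
  obtain ⟨α, hαmem, hαeq⟩ := intermediate_value_Ioo' hA0.le hcont.continuousOn
    (show 1 ∈ Set.Ioo (f A) (f 0) from ⟨hfA, h1f0⟩)
  refine ⟨α, ⟨hαmem.1, hαeq⟩, ?_⟩
  rintro β ⟨hβ0, hβeq⟩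
  apply hanti.injective
  show f β = f α
  rw [hαeq, ← hβeq]
end

section
/- Let U be a finite alphabet of size K with cost c : U → (0,∞) extended additively to strings (c(u₁…u_k) = ∑ c(u_i)), and let α_c be the cost capacity, i.e., the positive root of ∑_{u∈U} K^{-α c(u)} = 1. Then for any prefix-free set S of nonempty finite strings over U, ∑_{s ∈ S} K^{-α_c c(s)} ≤ 1. -/
/-- Additive cost of a string over the code alphabet. -/
noncomputable def strCost {U : Type*} (c : U → ℝ) (s : List U) : ℝ := (s.map c).sum

lemma kraft_aux {U : Type*} [Fintype U] [Inhabited U] (p : U → ℝ) (hp : ∀ u, 0 ≤ p u)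
    (hsum : ∑ u : U, p u ≤ 1) (w : List U → ℝ) (hw0 : w [] = 1)
    (hwc : ∀ u t, w (u :: t) = p u * w t) (hwpos : ∀ s, 0 ≤ w s) :
    ∀ N (F : Finset (List U)), (∀ s ∈ F, s.length ≤ N) →
      (∀ s ∈ F, ∀ t ∈ F, s <+: t → s = t) → ∑ s ∈ F, w s ≤ 1 := by
  classical
  intro N
  induction N with
  | zero =>
    intro F hlen _
    have hsub : F ⊆ {[]} := by
      intro s hs
      simp only [Finset.mem_singleton]
      exact List.length_eq_zero_iff.mp (Nat.le_zero.mp (hlen s hs))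
    calc ∑ s ∈ F, w s ≤ ∑ s ∈ ({[]} : Finset (List U)), w s :=
          Finset.sum_le_sum_of_subset_of_nonneg hsub (fun s _ _ => hwpos s)
      _ = 1 := by simp [hw0]
  | succ N ih =>
    intro F hlen hpf
    by_cases hnil : [] ∈ F
    · have hsub : F ⊆ {[]} := by
        intro s hs
        simp only [Finset.mem_singleton]
        exact (hpf [] hnil s hs List.nil_prefix).symm
      calc ∑ s ∈ F, w s ≤ ∑ s ∈ ({[]} : Finset (List U)), w s :=
            Finset.sum_le_sum_of_subset_of_nonneg hsub (fun s _ _ => hwpos s)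
        _ = 1 := by simp [hw0]
    · have hne : ∀ s ∈ F, s ≠ [] := fun s hs h => hnil (h ▸ hs)
      have hcons : ∀ s ∈ F, s = s.head! :: s.tail := by
        intro s hs
        exact (List.cons_head!_tail (hne s hs)).symm
      rw [← Finset.sum_fiberwise_of_maps_to (g := fun s : List U => s.head!)
        (fun s _ => Finset.mem_univ _) w]
      have key : ∀ u : U, ∑ s ∈ F.filter (fun s => s.head! = u), w s ≤ p u := by
        intro u
        set Fu := F.filter (fun s => s.head! = u) with hFu
        have hmem : ∀ s ∈ Fu, s = u :: s.tail := by
          intro s hs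
          rw [Finset.mem_filter] at hs
          conv_lhs => rw [hcons s hs.1]
          rw [hs.2]
        have h1 : ∑ s ∈ Fu, w s = p u * ∑ s ∈ Fu, w s.tail := by
          rw [Finset.mul_sum]
          refine Finset.sum_congr rfl fun s hs => ?_
          conv_lhs => rw [hmem s hs]
          exact hwc u s.tail
        have hinj : Set.InjOn List.tail (Fu : Set (List U)) := by
          intro a ha b hb hab
          rw [hmem a ha, hmem b hb, hab]
        have h2 : ∑ s ∈ Fu, w s.tail = ∑ t ∈ Fu.image List.tail, w t :=
          (Finset.sum_image (fun a ha b hb h => hinj ha hb h)).symm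
        have h3 : ∑ t ∈ Fu.image List.tail, w t ≤ 1 := by
          apply ih
          · intro t ht
            obtain ⟨s, hs, rfl⟩ := Finset.mem_image.mp ht
            have := hlen s (Finset.mem_filter.mp hs).1
            have hl : s.length = s.tail.length + 1 := by
              conv_lhs => rw [hmem s hs]
              simp
            omega
          · intro t1 ht1 t2 ht2 hpre
            obtain ⟨s1, hs1, rfl⟩ := Finset.mem_image.mp ht1
            obtain ⟨s2, hs2, rfl⟩ := Finset.mem_image.mp ht2
            have : s1 = s2 := by
              apply hpf s1 (Finset.mem_filter.mp hs1).1 s2 (Finset.mem_filter.mp hs2).1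
              rw [hmem s1 hs1, hmem s2 hs2]
              exact List.cons_prefix_cons.mpr ⟨rfl, hpre⟩
            rw [this]
        calc ∑ s ∈ Fu, w s = p u * ∑ s ∈ Fu, w s.tail := h1
          _ = p u * ∑ t ∈ Fu.image List.tail, w t := by rw [h2]
          _ ≤ p u * 1 := by
              apply mul_le_mul_of_nonneg_left h3 (hp u)
          _ = p u := mul_one _
      calc ∑ u : U, ∑ s ∈ F.filter (fun s => s.head! = u), w s
          ≤ ∑ u : U, p u := Finset.sum_le_sum fun u _ => key u
        _ ≤ 1 := hsum

/-- Generalized Kraft inequality for prefix-free sets of strings with costs. -/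
theorem kraft_inequality_cost {U : Type*} [Fintype U] (K : ℕ) (hK : 2 ≤ K)
    (hcard : Fintype.card U = K) (c : U → ℝ) (hc : ∀ u, 0 < c u)
    (α : ℝ) (hα : 0 < α) (hroot : ∑ u : U, (K : ℝ) ^ (-(α * c u)) = 1)
    (S : Set (List U)) (hne : ∀ s ∈ S, s ≠ [])
    (hpf : ∀ s ∈ S, ∀ t ∈ S, s <+: t → s = t) :
    ∑' s : S, (K : ℝ) ^ (-(α * strCost c (s : List U))) ≤ 1 := by
  classical
  haveI : Inhabited U := Classical.inhabited_of_nonempty (Fintype.card_pos_iff.mp (by omega : 0 < Fintype.card U))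
  have hKpos : (0 : ℝ) < K := by positivity
  set p : U → ℝ := fun u => (K : ℝ) ^ (-(α * c u)) with hp
  set w : List U → ℝ := fun s => (K : ℝ) ^ (-(α * strCost c s)) with hw
  have hw0 : w [] = 1 := by simp [hw, strCost]
  have hwc : ∀ u t, w (u :: t) = p u * w t := by
    intro u t
    simp only [hw, hp, strCost, List.map_cons, List.sum_cons]
    rw [← Real.rpow_add hKpos]
    ring_nf
  have hwpos : ∀ s, 0 ≤ w s := fun s => Real.rpow_nonneg hKpos.le _
  have hppos : ∀ u, 0 ≤ p u := fun u => Real.rpow_nonneg hKpos.le _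
  have key : ∀ F : Finset S, ∑ s ∈ F, w (s : List U) ≤ 1 := by
    intro F
    have := kraft_aux p hppos hroot.le w hw0 hwc hwpos
      ((F.image (fun s : S => (s : List U))).sup List.length)
      (F.image (fun s : S => (s : List U)))
      (fun s hs => Finset.le_sup hs)
      (fun s hs t ht hpre => by
        obtain ⟨s', _, rfl⟩ := Finset.mem_image.mp hs
        obtain ⟨t', _, rfl⟩ := Finset.mem_image.mp ht
        exact hpf _ s'.2 _ t'.2 hpre)
    calc ∑ s ∈ F, w (s : List U)
        = ∑ s ∈ F.image (fun s : S => (s : List U)), w s :=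
          (Finset.sum_image (fun a _ b _ h => Subtype.ext h)).symm
      _ ≤ 1 := this
  have hsummable : Summable (fun s : S => w (s : List U)) :=
    summable_of_sum_le (fun s => hwpos _) key
  exact Summable.tsum_le_of_sum_le hsummable key
end

section
/- Let X be a random variable on a countable set 𝒳 with distribution P, and suppose φ is an encoder satisfying c(φ(x)) ≤ −(1/α_c) log_K P(x) + (log_K 2)/α_c + c_max for all x with P(x) > 0, where c_max = max_{u∈U} c(u). Then for any threshold η > 0 and any z > 0, Pr[c(φ(X)) > η] < Pr[z·P(X) ≤ K^{-α_c η}] + z·K^{α_c c_max + 1}. -/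
/-- Probability of a set under a (real-valued) distribution. -/
noncomputable def prob {X : Type*} (P : X → ℝ) (S : Set X) : ℝ := ∑' x, S.indicator P x

/-- Direct bound (Lemma 1): overflow probability of a Han–Uchida-type encoder is upper
bounded by the information-spectrum tail probability plus `z·K^{α c_max + 1}`. -/
theorem overflow_direct_bound {U X : Type*} [Fintype U] [Countable X]
    (K : ℕ) (hK : 2 ≤ K) (hcard : Fintype.card U = K)
    (c : U → ℝ) (hc : ∀ u, 0 < c u)
    (cmax : ℝ) (hcmax : IsGreatest (Set.range c) cmax)
    (α : ℝ) (hα : 0 < α) (hroot : ∑ u : U, (K : ℝ) ^ (-(α * c u)) = 1)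
    (P : X → ℝ) (hP0 : ∀ x, 0 ≤ P x) (hP1 : HasSum P 1)
    (φ : X → List U)
    (hcode : ∀ x, 0 < P x →
      strCost c (φ x) ≤ -(1 / α) * Real.logb K (P x) + Real.logb K 2 / α + cmax)
    (η : ℝ) (hη : 0 < η) (z : ℝ) (hz : 0 < z) :
    prob P {x | η < strCost c (φ x)}
      < prob P {x | z * P x ≤ (K : ℝ) ^ (-(α * η))} + z * (K : ℝ) ^ (α * cmax + 1) := by
  have hK0 : (0:ℝ) < (K:ℝ) := by positivity
  have hK1 : (1:ℝ) < (K:ℝ) := by exact_mod_cast Nat.lt_of_lt_of_le one_lt_two hK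
  have hK2 : (2:ℝ) ≤ (K:ℝ) := by exact_mod_cast hK
  set t : ℝ := (K : ℝ) ^ (-(α * η)) with ht_def
  have ht0 : 0 < t := Real.rpow_pos_of_pos hK0 _
  have hs : Summable P := hP1.summable
  set A : Set X := {x | η < strCost c (φ x)} with hA_def
  set A1 : Set X := {x | z * P x ≤ t} with hA1_def
  set B : Set X := A \ A1 with hB_def
  -- pointwise indicator bound
  have hpoint : ∀ x, A.indicator P x ≤ A1.indicator P x + B.indicator P x := by
    intro x
    by_cases hxA : x ∈ A
    · by_cases hxA1 : x ∈ A1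
      · rw [Set.indicator_of_mem hxA, Set.indicator_of_mem hxA1]
        have := Set.indicator_nonneg (fun y _ => hP0 y) (s := B) x
        linarith
      · have hxB : x ∈ B := ⟨hxA, hxA1⟩
        rw [Set.indicator_of_mem hxA, Set.indicator_of_mem hxB]
        have := Set.indicator_nonneg (fun y _ => hP0 y) (s := A1) x
        linarith
    · rw [Set.indicator_of_notMem hxA]
      have h1 := Set.indicator_nonneg (fun y _ => hP0 y) (s := A1) x
      have h2 := Set.indicator_nonneg (fun y _ => hP0 y) (s := B) x
      linarith
  have hsplit : prob P A ≤ prob P A1 + prob P B := by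
    have h := Summable.tsum_le_tsum hpoint (hs.indicator A)
      ((hs.indicator A1).add (hs.indicator B))
    rw [Summable.tsum_add (hs.indicator A1) (hs.indicator B)] at h
    exact h
  -- B is finite
  have hcof : ∀ᶠ x in Filter.cofinite, P x < t / z :=
    hs.tendsto_cofinite_zero.eventually_lt_const (div_pos ht0 hz)
  have hBsub : B ⊆ {x | ¬ P x < t / z} := by
    intro x hx
    have hx2 : t < z * P x := lt_of_not_ge hx.2
    have : t / z < P x := (div_lt_iff₀ hz).2 (by linarith [mul_comm z (P x)])
    simp only [Set.mem_setOf_eq, not_lt]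
    exact this.le
  have hfin : B.Finite := (Filter.eventually_cofinite.mp hcof).subset hBsub
  set F := hfin.toFinset with hF_def
  have hprobB : prob P B = ∑ x ∈ F, P x := by
    rw [prob, tsum_eq_sum (s := F)]
    · exact Finset.sum_congr rfl fun x hx =>
        Set.indicator_of_mem (hfin.mem_toFinset.mp hx) P
    · intro x hx
      exact Set.indicator_of_notMem (fun h => hx (hfin.mem_toFinset.mpr h)) P
  set b1 : ℝ := 2 * (K:ℝ) ^ (α * cmax) * t with hb1_def
  have hb1pos : 0 < b1 := by positivity
  -- per-point bounds on B
  have hlow : ∀ x ∈ F, t / z < P x := by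
    intro x hx
    have hx' := hfin.mem_toFinset.mp hx
    have hx2 : t < z * P x := lt_of_not_ge hx'.2
    exact (div_lt_iff₀ hz).2 (by linarith [mul_comm z (P x)])
  have hupp : ∀ x ∈ F, P x < b1 := by
    intro x hx
    have hx' := hfin.mem_toFinset.mp hx
    have hPx : 0 < P x := lt_trans (div_pos ht0 hz) (hlow x hx)
    have hc' := hcode x hPx
    have hA' : η < strCost c (φ x) := hx'.1
    set L := Real.logb K (P x) with hL_def
    have key : α * (-(1/α) * L + Real.logb K 2 / α + cmax)
        = -L + Real.logb K 2 + α * cmax := by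
      field_simp
    have hmul := mul_lt_mul_of_pos_left (lt_of_lt_of_le hA' hc') hα
    rw [key] at hmul
    have hlog : L < Real.logb K 2 + α * cmax + (-(α * η)) := by linarith
    have hre : P x = (K:ℝ) ^ L := (Real.rpow_logb hK0 (ne_of_gt hK1) hPx).symm
    have hlt := Real.rpow_lt_rpow_of_exponent_lt hK1 hlog
    rw [← hre] at hlt
    have : (K:ℝ) ^ (Real.logb K 2 + α * cmax + (-(α * η)))
        = 2 * (K:ℝ) ^ (α * cmax) * t := by
      rw [Real.rpow_add hK0, Real.rpow_add hK0,
        Real.rpow_logb hK0 (ne_of_gt hK1) two_pos]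
    rw [this] at hlt
    exact hlt
  -- bound prob B
  have hRHSpos : 0 < z * (K:ℝ) ^ (α * cmax + 1) := by positivity
  have hfinal2 : 2 * z * (K:ℝ) ^ (α * cmax) ≤ z * (K:ℝ) ^ (α * cmax + 1) := by
    rw [Real.rpow_add hK0, Real.rpow_one]
    have hKc : (0:ℝ) < (K:ℝ) ^ (α * cmax) := Real.rpow_pos_of_pos hK0 _
    nlinarith [mul_nonneg (mul_pos hz hKc).le (sub_nonneg.mpr hK2)]
  have hprobBlt : prob P B < z * (K:ℝ) ^ (α * cmax + 1) := by
    rcases F.eq_empty_or_nonempty with hF | hF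
    · rw [hprobB, hF, Finset.sum_empty]; exact hRHSpos
    · have h1 : ∑ x ∈ F, P x < ∑ _x ∈ F, b1 :=
        Finset.sum_lt_sum_of_nonempty hF hupp
      rw [Finset.sum_const, nsmul_eq_mul] at h1
      -- card bound
      have h2 : (F.card : ℝ) * (t / z) ≤ ∑ x ∈ F, P x := by
        have := Finset.card_nsmul_le_sum F P (t / z) (fun x hx => (hlow x hx).le)
        rwa [nsmul_eq_mul] at this
      have h3 : ∑ x ∈ F, P x ≤ 1 := by
        have := Summable.sum_le_tsum F (fun x _ => hP0 x) hs
        rwa [hP1.tsum_eq] at this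
      have h4 : (F.card : ℝ) ≤ z / t := by
        rw [le_div_iff₀ ht0]
        have htz : 0 < t / z := div_pos ht0 hz
        calc (F.card : ℝ) * t = ((F.card : ℝ) * (t / z)) * z := by field_simp
          _ ≤ 1 * z := by nlinarith
          _ = z := one_mul z
      have h5 : (F.card : ℝ) * b1 ≤ (z / t) * b1 :=
        mul_le_mul_of_nonneg_right h4 hb1pos.le
      have h6 : (z / t) * b1 = 2 * z * (K:ℝ) ^ (α * cmax) := by
        rw [hb1_def]; field_simp
      rw [hprobB]
      calc ∑ x ∈ F, P x < (F.card : ℝ) * b1 := h1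
        _ ≤ (z / t) * b1 := h5
        _ = 2 * z * (K:ℝ) ^ (α * cmax) := h6
        _ ≤ z * (K:ℝ) ^ (α * cmax + 1) := hfinal2
  have hA1nonneg : 0 ≤ prob P A1 := by
    apply tsum_nonneg
    intro x
    exact Set.indicator_nonneg (fun y _ => hP0 y) x
  calc prob P A ≤ prob P A1 + prob P B := hsplit
    _ < prob P A1 + z * (K:ℝ) ^ (α * cmax + 1) := by linarith
end

section
/- For a general source X and 0 ≤ ε < 1, the infimum R(ε|X) of ε-achievable first-order overflow thresholds (R such that there exist prefix-free encoders φ_n with limsup_n Pr[c(φ_n(X^n)) > nR] ≤ ε) equals inf{ R : F(R) ≤ ε }, where F(R) = limsup_{n→∞} Pr[ (1/(n α_c)) log_K (1/P_{X^n}(X^n)) ≥ R ]. -/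
noncomputable section
namespace OverflowProof
open Real Filter Set
set_option linter.unusedSectionVars false

variable {U : Type*} [Fintype U] (K : ℕ) (c : U → ℝ) (α : ℝ)

/-- symbol weight -/
def qv (u : U) : ℝ := (K : ℝ) ^ (-(α * c u))

variable (e : U ≃ Fin K)

def cumN (j : ℕ) : ℝ := ∑ v ∈ Finset.univ.filter (fun v => (e v : ℕ) < j), qv K c α v

def lep : List U → ℝ
  | [] => 0
  | u :: s => cumN K c α e (e u : ℕ) + qv K c α u * lep s

def Qp : List U → ℝ
  | [] => 1
  | u :: s => qv K c α u * Qp s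

variable {K c α e}

section basic
variable (hK : 2 ≤ K) (hc : ∀ u, 0 < c u) (hα : 0 < α)

lemma oneltK (hK : 2 ≤ K) : (1:ℝ) < K := by exact_mod_cast hK

lemma qv_pos (hK : 2 ≤ K) (u : U) : 0 < qv K c α u :=
  Real.rpow_pos_of_pos (by positivity) _

lemma qv_lt_one (hK : 2 ≤ K) (hc : ∀ u, 0 < c u) (hα : 0 < α) (u : U) :
    qv K c α u < 1 :=
  Real.rpow_lt_one_of_one_lt_of_neg (oneltK hK) (by nlinarith [hc u])

lemma Qp_pos (hK : 2 ≤ K) (s : List U) : 0 < Qp K c α s := by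
  induction s with
  | nil => norm_num [Qp]
  | cons u s ih => exact mul_pos (qv_pos hK u) ih

lemma Qp_le_one (hK : 2 ≤ K) (hc : ∀ u, 0 < c u) (hα : 0 < α) (s : List U) :
    Qp K c α s ≤ 1 := by
  induction s with
  | nil => norm_num [Qp]
  | cons u s ih =>
    have h1 := qv_pos (c := c) (α := α) hK u
    have h2 := qv_lt_one hK hc hα u
    have := Qp_pos (c := c) (α := α) hK s
    calc qv K c α u * Qp K c α s ≤ qv K c α u * 1 := by nlinarith
    _ ≤ 1 := by nlinarith

lemma cumN_mono (hK : 2 ≤ K) : Monotone (cumN K c α e) := by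
  intro i j hij
  apply Finset.sum_le_sum_of_subset_of_nonneg
  · intro v hv
    simp only [Finset.mem_filter, Finset.mem_univ, true_and] at hv ⊢
    omega
  · intro v _ _
    exact (qv_pos hK v).le

lemma cumN_zero : cumN K c α e 0 = 0 := by simp [cumN]

lemma cumN_nonneg (hK : 2 ≤ K) (j : ℕ) : 0 ≤ cumN K c α e j := by
  rw [← cumN_zero (K := K) (c := c) (α := α) (e := e)]
  exact cumN_mono hK (Nat.zero_le j)

lemma cumN_of_K_le (hroot : ∑ u : U, qv K c α u = 1) {j : ℕ} (hj : K ≤ j) :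
    cumN K c α e j = 1 := by
  rw [← hroot]
  apply Finset.sum_congr _ (fun _ _ => rfl)
  rw [Finset.filter_true_of_mem]
  intro v _
  exact lt_of_lt_of_le (e v).isLt hj

lemma cumN_le_one (hK : 2 ≤ K) (hroot : ∑ u : U, qv K c α u = 1) (j : ℕ) :
    cumN K c α e j ≤ 1 := by
  rcases le_or_gt K j with h | h
  · exact (cumN_of_K_le hroot h).le
  · rw [← cumN_of_K_le (e := e) hroot (le_refl K)]
    exact cumN_mono hK h.le

lemma cumN_succ {j : ℕ} (hj : j < K) :
    cumN K c α e (j + 1) = cumN K c α e j + qv K c α (e.symm ⟨j, hj⟩) := by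
  classical
  have h : Finset.univ.filter (fun v => (e v : ℕ) < j + 1)
      = insert (e.symm ⟨j, hj⟩) (Finset.univ.filter (fun v => (e v : ℕ) < j)) := by
    ext v
    simp only [Finset.mem_filter, Finset.mem_insert, Finset.mem_univ, true_and]
    constructor
    · intro hv
      rcases Nat.lt_succ_iff_lt_or_eq.mp hv with h1 | h1
      · exact Or.inr h1
      · left
        have : e v = ⟨j, hj⟩ := Fin.ext h1
        rw [← this]; simp
    · rintro (h1 | h1)
      · subst h1; simp
      · omega
  rw [cumN, h, Finset.sum_insert (by simp), ← cumN]
  ring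
lemma cumN_succ' (u : U) :
    cumN K c α e ((e u : ℕ) + 1) = cumN K c α e (e u : ℕ) + qv K c α u := by
  have h := cumN_succ (c := c) (α := α) (e := e) (e u).isLt
  simpa using h

lemma lep_nonneg (hK : 2 ≤ K) (s : List U) : 0 ≤ lep K c α e s := by
  induction s with
  | nil => norm_num [lep]
  | cons u s ih =>
    have h1 := qv_pos (c := c) (α := α) hK u
    have h2 := cumN_nonneg (c := c) (α := α) (e := e) hK (e u : ℕ)
    simp only [lep]; nlinarith

lemma lep_add_Qp_le_one (hK : 2 ≤ K) (hroot : ∑ u : U, qv K c α u = 1) (s : List U) :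
    lep K c α e s + Qp K c α s ≤ 1 := by
  induction s with
  | nil => norm_num [lep, Qp]
  | cons u s ih =>
    have h1 := qv_pos (c := c) (α := α) hK u
    have h2 : cumN K c α e ((e u : ℕ) + 1) ≤ 1 := cumN_le_one hK hroot _
    rw [cumN_succ'] at h2
    simp only [lep, Qp]; nlinarith

lemma Qp_append (s t : List U) : Qp K c α (s ++ t) = Qp K c α s * Qp K c α t := by
  induction s with
  | nil => simp [Qp]
  | cons u s ih => simp only [List.cons_append, Qp, List.append_eq, ih]; ring

lemma lep_append (s t : List U) :
    lep K c α e (s ++ t) = lep K c α e s + Qp K c α s * lep K c α e t := by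
  induction s with
  | nil => simp [lep, Qp]
  | cons u s ih => simp only [List.cons_append, lep, Qp, List.append_eq, ih]; ring

lemma prefix_nest (hK : 2 ≤ K) (hroot : ∑ u : U, qv K c α u = 1) {s t : List U}
    (h : s <+: t) :
    lep K c α e s ≤ lep K c α e t ∧
      lep K c α e t + Qp K c α t ≤ lep K c α e s + Qp K c α s := by
  obtain ⟨r, rfl⟩ := h
  rw [lep_append, Qp_append]
  have h1 := Qp_pos (c := c) (α := α) hK s
  have h2 := lep_nonneg (c := c) (α := α) (e := e) hK r
  have h3 := lep_add_Qp_le_one (c := c) (α := α) (e := e) hK hroot r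
  constructor
  · nlinarith
  · nlinarith

lemma sibling_disj (hK : 2 ≤ K) (hroot : ∑ u : U, qv K c α u = 1) {a b : U}
    (hab : (e a : ℕ) < (e b : ℕ)) (s t : List U) :
    lep K c α e (a :: s) + Qp K c α (a :: s) ≤ lep K c α e (b :: t) := by
  have hmono : cumN K c α e ((e a : ℕ) + 1) ≤ cumN K c α e (e b : ℕ) :=
    cumN_mono hK hab
  rw [cumN_succ'] at hmono
  have hqa := qv_pos (c := c) (α := α) hK a
  have hqb := qv_pos (c := c) (α := α) hK b
  have hs := lep_add_Qp_le_one (c := c) (α := α) (e := e) hK hroot s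
  have ht := lep_nonneg (c := c) (α := α) (e := e) hK t
  simp only [lep, Qp]
  nlinarith

lemma interval_disjoint (hK : 2 ≤ K) (hroot : ∑ u : U, qv K c α u = 1) {s t : List U}
    (h1 : ¬ s <+: t) (h2 : ¬ t <+: s) :
    lep K c α e s + Qp K c α s ≤ lep K c α e t ∨
      lep K c α e t + Qp K c α t ≤ lep K c α e s := by
  induction s generalizing t with
  | nil => exact absurd (List.nil_prefix) h1
  | cons a s' ih =>
    cases t with
    | nil => exact absurd (List.nil_prefix) h2
    | cons b t' =>
      by_cases hab : a = b
      · subst hab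
        rw [List.cons_prefix_cons] at h1 h2
        simp only [true_and] at h1 h2
        have hq := qv_pos (c := c) (α := α) hK a
        rcases ih h1 h2 with h | h
        · left; simp only [lep, Qp]; nlinarith
        · right; simp only [lep, Qp]; nlinarith
      · have hne : (e a : ℕ) ≠ (e b : ℕ) := fun hc' => hab (e.injective (Fin.ext hc'))
        rcases hne.lt_or_gt with h | h
        · exact Or.inl (sibling_disj hK hroot h s' t')
        · exact Or.inr (sibling_disj hK hroot h t' s')

lemma exists_child (hK : 2 ≤ K) (hroot : ∑ u : U, qv K c α u = 1) {t : ℝ}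
    (h0 : 0 ≤ t) (h1 : t < 1) :
    ∃ u : U, cumN K c α e (e u : ℕ) ≤ t ∧ t < cumN K c α e (e u : ℕ) + qv K c α u := by
  classical
  have hex : ∃ j : ℕ, t < cumN K c α e (j + 1) := by
    refine ⟨K - 1, ?_⟩
    rw [cumN_of_K_le hroot (by omega)]
    exact h1
  set j := Nat.find hex with hj
  have hspec : t < cumN K c α e (j + 1) := Nat.find_spec hex
  have hjK : j < K := by
    have h2 : t < cumN K c α e ((K - 1) + 1) := by
      rw [cumN_of_K_le hroot (by omega)]; exact h1
    have := Nat.find_min' hex h2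
    omega
  have hlow : cumN K c α e j ≤ t := by
    rcases Nat.eq_zero_or_pos j with h | h
    · rw [h, cumN_zero]; exact h0
    · obtain ⟨j', hj'⟩ := Nat.exists_eq_succ_of_ne_zero h.ne'
      have hmin := Nat.find_min hex (show j' < j by omega)
      push_neg at hmin
      calc cumN K c α e j = cumN K c α e (j' + 1) := by rw [hj']
      _ ≤ t := hmin
  refine ⟨e.symm ⟨j, hjK⟩, ?_, ?_⟩
  · simpa using hlow
  · have := cumN_succ (c := c) (α := α) (e := e) hjK
    simp only [Equiv.apply_symm_apply]
    rw [← this]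
    simpa using hspec

variable (K c α e) in
/-- pick the child symbol whose subinterval contains `t`. -/
def pick [Nonempty U] (t : ℝ) : U :=
  if h : ∃ u : U, cumN K c α e (e u : ℕ) ≤ t ∧ t < cumN K c α e (e u : ℕ) + qv K c α u
  then h.choose else Classical.arbitrary U

lemma pick_spec [Nonempty U] (hK : 2 ≤ K) (hroot : ∑ u : U, qv K c α u = 1) {t : ℝ}
    (h0 : 0 ≤ t) (h1 : t < 1) :
    cumN K c α e (e (pick K c α e t) : ℕ) ≤ t ∧
      t < cumN K c α e (e (pick K c α e t) : ℕ) + qv K c α (pick K c α e t) := by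
  have h := exists_child (e := e) hK hroot h0 h1
  rw [pick, dif_pos h]
  exact h.choose_spec

variable (K c α e) in
def build [Nonempty U] (m : ℝ) : ℕ → List U
  | 0 => []
  | k + 1 =>
    build m k ++
      [pick K c α e ((m - lep K c α e (build m k)) / Qp K c α (build m k))]

lemma lep_single (u : U) : lep K c α e [u] = cumN K c α e (e u : ℕ) := by
  simp [lep]

lemma Qp_single (u : U) : Qp K c α [u] = qv K c α u := by simp [Qp]

lemma build_mem [Nonempty U] (hK : 2 ≤ K) (hroot : ∑ u : U, qv K c α u = 1) {m : ℝ}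
    (h0 : 0 ≤ m) (h1 : m < 1) (k : ℕ) :
    lep K c α e (build K c α e m k) ≤ m ∧
      m < lep K c α e (build K c α e m k) + Qp K c α (build K c α e m k) := by
  induction k with
  | zero => simpa [build, lep, Qp] using ⟨h0, h1⟩
  | succ k ih =>
    obtain ⟨ih1, ih2⟩ := ih
    set s := build K c α e m k with hs
    have hQ := Qp_pos (c := c) (α := α) hK s
    set t := (m - lep K c α e s) / Qp K c α s with ht
    have ht0 : 0 ≤ t := div_nonneg (by linarith) hQ.le
    have ht1 : t < 1 := (div_lt_one hQ).mpr (by linarith)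
    obtain ⟨hp1, hp2⟩ := pick_spec (e := e) hK hroot ht0 ht1
    set u := pick K c α e t with hu
    have h1' : lep K c α e (s ++ [u]) = lep K c α e s + Qp K c α s * cumN K c α e (e u : ℕ) := by
      rw [lep_append, lep_single]
    have h2' : Qp K c α (s ++ [u]) = Qp K c α s * qv K c α u := by
      rw [Qp_append, Qp_single]
    constructor
    · show lep K c α e (s ++ [u]) ≤ m
      rw [h1']
      rw [le_div_iff₀ hQ] at hp1
      nlinarith
    · show m < lep K c α e (s ++ [u]) + Qp K c α (s ++ [u])
      rw [h1', h2']
      rw [div_lt_iff₀ hQ] at hp2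
      nlinarith

lemma build_Qp_le [Nonempty U] (hK : 2 ≤ K) {qM : ℝ} (hqM : ∀ u, qv K c α u ≤ qM)
    (m : ℝ) (k : ℕ) : Qp K c α (build K c α e m k) ≤ qM ^ k := by
  induction k with
  | zero => simp [build, Qp]
  | succ k ih =>
    rw [build, Qp_append, Qp_single, pow_succ]
    have h1 := Qp_pos (c := c) (α := α) hK (build K c α e m k)
    have h2 := qv_pos (c := c) (α := α) hK
      (pick K c α e ((m - lep K c α e (build K c α e m k)) / Qp K c α (build K c α e m k)))
    have h0M : (0:ℝ) ≤ qM := le_trans (qv_pos hK (Classical.arbitrary U)).le (hqM _)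
    exact mul_le_mul ih (hqM _) h2.le (by positivity)

lemma exists_interval [Nonempty U] (hK : 2 ≤ K) (hroot : ∑ u : U, qv K c α u = 1)
    {qm qM : ℝ} (hqm0 : 0 < qm) (hqm : ∀ u, qm ≤ qv K c α u)
    (hqM : ∀ u, qv K c α u ≤ qM) (hqM1 : qM < 1)
    {a p : ℝ} (ha : 0 ≤ a) (hp : 0 < p) (hap : a + p ≤ 1) :
    ∃ s : List U, a ≤ lep K c α e s ∧ lep K c α e s + Qp K c α s ≤ a + p ∧
      qm * (p / 2) ≤ Qp K c α s := by
  classical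
  obtain ⟨m, hm⟩ : ∃ m : ℝ, m = a + p / 2 := ⟨_, rfl⟩
  have h0 : 0 ≤ m := by linarith
  have h1 : m < 1 := by linarith
  have hex : ∃ k : ℕ, Qp K c α (build K c α e m k) ≤ p / 2 := by
    obtain ⟨k, hk⟩ := exists_pow_lt_of_lt_one (by linarith : (0:ℝ) < p / 2) hqM1
    exact ⟨k, le_of_lt (lt_of_le_of_lt (build_Qp_le (e := e) hK hqM m k) hk)⟩
  set k0 := Nat.find hex with hk0
  have hspec : Qp K c α (build K c α e m k0) ≤ p / 2 := Nat.find_spec hex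
  have hk0ne : k0 ≠ 0 := by
    intro hcon
    rw [hcon] at hspec
    simp only [build, Qp] at hspec
    linarith
  obtain ⟨j, hj⟩ := Nat.exists_eq_succ_of_ne_zero hk0ne
  have hjlt : p / 2 < Qp K c α (build K c α e m j) := by
    by_contra hcon
    push_neg at hcon
    exact Nat.find_min hex (by omega) hcon
  refine ⟨build K c α e m k0, ?_, ?_, ?_⟩
  · have hmem := build_mem (e := e) hK hroot h0 h1 k0
    linarith [hmem.1, hmem.2]
  · have hmem := build_mem (e := e) hK hroot h0 h1 k0
    linarith [hmem.1, hmem.2]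
  · rw [hj, build, Qp_append, Qp_single]
    have hq := hqm (pick K c α e ((m - lep K c α e (build K c α e m j)) / Qp K c α (build K c α e m j)))
    have hqpos := qv_pos (c := c) (α := α) hK (pick K c α e ((m - lep K c α e (build K c α e m j)) / Qp K c α (build K c α e m j)))
    calc qm * (p / 2)
        ≤ qv K c α (pick K c α e ((m - lep K c α e (build K c α e m j)) / Qp K c α (build K c α e m j))) * (p / 2) :=
          mul_le_mul_of_nonneg_right hq (by positivity)
      _ ≤ qv K c α (pick K c α e ((m - lep K c α e (build K c α e m j)) / Qp K c α (build K c α e m j))) * Qp K c α (build K c α e m j) :=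
          mul_le_mul_of_nonneg_left hjlt.le hqpos.le
      _ = Qp K c α (build K c α e m j) * qv K c α (pick K c α e ((m - lep K c α e (build K c α e m j)) / Qp K c α (build K c α e m j))) := by ring

lemma Qp_eq_rpow (hK : 2 ≤ K) (s : List U) :
    Qp K c α s = (K : ℝ) ^ (-(α * strCost c s)) := by
  induction s with
  | nil => simp [Qp, strCost]
  | cons u s ih =>
    have hs : strCost c (u :: s) = c u + strCost c s := by simp [strCost]
    have hKpos : (0:ℝ) < K := by positivity
    rw [Qp, ih, qv, hs, ← Real.rpow_add hKpos]
    congr 1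
    ring

lemma cost_le_of_Qp_ge (hK : 2 ≤ K) (hα : 0 < α) {s : List U} {B : ℝ}
    (hB : 0 < B) (h : B ≤ Qp K c α s) :
    strCost c s ≤ (1 / α) * Real.logb K B⁻¹ := by
  have hKpos : (0:ℝ) < K := by positivity
  have hK1 : (1:ℝ) < K := oneltK hK
  have hlogb : Real.logb K B ≤ -(α * strCost c s) := by
    have := Real.logb_le_logb_of_le hK1 hB h
    rwa [Qp_eq_rpow hK, Real.logb_rpow hKpos (by linarith)] at this
  rw [Real.logb_inv]
  calc strCost c s = (1 / α) * (α * strCost c s) := by field_simp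
  _ ≤ (1 / α) * -Real.logb K B := by
      apply mul_le_mul_of_nonneg_left _ (by positivity)
      linarith

/-- Existence of a good prefix-free code for a single countable source. -/
lemma exists_good_code (e : U ≃ Fin K) (hK : 2 ≤ K) (hc : ∀ u, 0 < c u) (hα : 0 < α)
    (hroot : ∑ u : U, qv K c α u = 1)
    {qm qM : ℝ} (hqm0 : 0 < qm) (hqm : ∀ u, qm ≤ qv K c α u)
    (hqM : ∀ u, qv K c α u ≤ qM) (hqM1 : qM < 1)
    {X : Type*} [Countable X] (P : X → ℝ) (hP0 : ∀ x, 0 ≤ P x) (hP1 : HasSum P 1) :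
    ∃ φ : X → List U, Function.Injective φ ∧ (∀ x, φ x ≠ []) ∧
      (∀ x y, φ x <+: φ y → φ x = φ y) ∧
      ∀ x, 0 < P x → strCost c (φ x) ≤
        (1 / α) * Real.logb K (P x)⁻¹ + (1 / α) * Real.logb K (2 / (qm * qm)) := by
  classical
  haveI : Nonempty U := ⟨e.symm ⟨0, by omega⟩⟩
  obtain ⟨ι, hι⟩ := Countable.exists_injective_nat X
  have hfin : ∀ x : X, (ι ⁻¹' Set.Iio (ι x)).Finite :=
    fun x => (Set.finite_Iio (ι x)).preimage hι.injOn
  set Fc : X → ℝ := fun x => ∑ y ∈ (hfin x).toFinset, P y with hFc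
  have hF0 : ∀ x, 0 ≤ Fc x := fun x => Finset.sum_nonneg fun y _ => hP0 y
  have hFstep : ∀ x : X, Fc x + P x = ∑ y ∈ insert x (hfin x).toFinset, P y := by
    intro x
    rw [Finset.sum_insert (by simp [Set.Finite.mem_toFinset])]
    ring
  have hFP : ∀ x, Fc x + P x ≤ 1 := by
    intro x
    rw [hFstep x, ← hP1.tsum_eq]
    exact Summable.sum_le_tsum _ (fun y _ => hP0 y) hP1.summable
  have horder : ∀ x y : X, ι x < ι y → Fc x + P x ≤ Fc y := by
    intro x y hxy
    rw [hFstep x]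
    apply Finset.sum_le_sum_of_subset_of_nonneg _ (fun z _ _ => hP0 z)
    intro z hz
    simp only [Finset.mem_insert, Set.Finite.mem_toFinset, Set.mem_preimage,
      Set.mem_Iio] at hz ⊢
    rcases hz with rfl | hz
    · exact hxy
    · omega
  have hcode : ∀ x : X, 0 < P x → ∃ s : List U,
      Fc x ≤ lep K c α e s ∧ lep K c α e s + Qp K c α s ≤ Fc x + P x ∧
        qm * (P x / 2) ≤ Qp K c α s :=
    fun x hx => exists_interval hK hroot hqm0 hqm hqM hqM1 (hF0 x) hx (hFP x)
  set code : ∀ x : X, 0 < P x → List U := fun x hx => (hcode x hx).choose with hcodedef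
  set u0 : U := e.symm ⟨0, by omega⟩ with hu0
  set u1 : U := e.symm ⟨1, by omega⟩ with hu1
  have hu01 : u0 ≠ u1 := by
    simp only [hu0, hu1, ne_eq, EmbeddingLike.apply_eq_iff_eq, Fin.mk.injEq]
    omega
  set φ : X → List U := fun x =>
    if h : 0 < P x then u1 :: code x h
    else u0 :: (List.replicate (ι x) u0 ++ [u1]) with hφ
  have hφpos : ∀ (z : X) (h : 0 < P z), φ z = u1 :: code z h := by
    intro z h; simp only [hφ]; rw [dif_pos h]
  have hφneg : ∀ z : X, ¬ 0 < P z → φ z = u0 :: (List.replicate (ι z) u0 ++ [u1]) := by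
    intro z h; simp only [hφ]; rw [dif_neg h]
  have hdisj : ∀ (x y : X) (hx : 0 < P x) (hy : 0 < P y), x ≠ y →
      ¬ code x hx <+: code y hy := by
    intro x y hx hy hne hpre
    obtain ⟨hx1, hx2, _⟩ := (hcode x hx).choose_spec
    obtain ⟨hy1, hy2, _⟩ := (hcode y hy).choose_spec
    have hQy := Qp_pos (c := c) (α := α) hK (code y hy)
    have hnest := prefix_nest (e := e) hK hroot hpre
    have hιne : ι x ≠ ι y := fun h => hne (hι h)
    rcases hιne.lt_or_gt with h | h
    · have := horder x y h
      linarith [hnest.2]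
    · have := horder y x h
      linarith [hnest.1]
  have hkey : ∀ x y : X, φ x <+: φ y → x = y := by
    intro x y hpre
    by_cases hx : 0 < P x <;> by_cases hy : 0 < P y
    · rw [hφpos x hx, hφpos y hy, List.cons_prefix_cons] at hpre
      by_contra hne
      exact hdisj x y hx hy hne hpre.2
    · rw [hφpos x hx, hφneg y hy, List.cons_prefix_cons] at hpre
      exact absurd hpre.1.symm hu01
    · rw [hφneg x hx, hφpos y hy, List.cons_prefix_cons] at hpre
      exact absurd hpre.1 hu01
    · rw [hφneg x hx, hφneg y hy, List.cons_prefix_cons] at hpre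
      have hpre2 := hpre.2
      have hlen : ι x + 1 ≤ ι y + 1 := by
        have := hpre2.length_le
        simpa using this
      have heq : ι x = ι y := by
        by_contra hne
        have hlt : ι x < ι y := by omega
        have hget := hpre2.getElem (i := ι x) (by simp)
        have hL : (List.replicate (ι x) u0 ++ [u1])[ι x]'(by simp) = u1 := by
          rw [List.getElem_append_right (by simp)]
          simp
        have hR : (List.replicate (ι y) u0 ++ [u1])[ι x]'(by simp; omega) = u0 := by
          rw [List.getElem_append_left (by simpa using hlt)]
          simp
        rw [hL, hR] at hget
        exact hu01 hget.symm
      exact hι heq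
  refine ⟨φ, fun x y h => hkey x y (h ▸ List.prefix_refl _), ?_, ?_, ?_⟩
  · intro x
    by_cases hx : 0 < P x
    · rw [hφpos x hx]; simp
    · rw [hφneg x hx]; simp
  · intro x y h
    rw [hkey x y h]
  · intro x hx
    obtain ⟨_, _, hQ⟩ := (hcode x hx).choose_spec
    have hφx : φ x = u1 :: code x hx := hφpos x hx
    have hQφ : qm * (qm * (P x / 2)) ≤ Qp K c α (φ x) := by
      rw [hφx, Qp]
      have h1 := hqm u1
      have h2 := Qp_pos (c := c) (α := α) hK (code x hx)
      calc qm * (qm * (P x / 2)) ≤ qm * Qp K c α (code x hx) :=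
            mul_le_mul_of_nonneg_left hQ hqm0.le
      _ ≤ qv K c α u1 * Qp K c α (code x hx) := mul_le_mul_of_nonneg_right h1 h2.le
    have hb : (0:ℝ) < qm * (qm * (P x / 2)) := by positivity
    have hcost := cost_le_of_Qp_ge hK hα hb hQφ
    have hrw : (qm * (qm * (P x / 2)))⁻¹ = (P x)⁻¹ * (2 / (qm * qm)) := by
      field_simp
    rw [hrw, Real.logb_mul (by positivity) (by positivity), mul_add] at hcost
    linarith

/-- Finite Kraft inequality for prefix-free codes. -/
lemma finite_kraft (e : U ≃ Fin K) (hK : 2 ≤ K) (hroot : ∑ u : U, qv K c α u = 1)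
    {X : Type*} (f : X → List U) (hpf : ∀ x y : X, x ≠ y → ¬ f x <+: f y)
    (s : Finset X) (hinj : Function.Injective f) :
    ∑ x ∈ s, Qp K c α (f x) ≤ 1 := by
  classical
  set I : X → Set ℝ := fun x =>
    Set.Ico (lep K c α e (f x)) (lep K c α e (f x) + Qp K c α (f x)) with hI
  have hd : (↑s : Set X).PairwiseDisjoint I := by
    intro x _ y _ hxy
    have h := interval_disjoint (e := e) hK hroot (hpf x y hxy) (hpf y x (Ne.symm hxy))
    simp only [I, Function.onFun]
    rw [Set.Ico_disjoint_Ico]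
    rcases h with h | h
    · exact le_max_of_le_right (le_trans (min_le_left _ _) h)
    · exact le_max_of_le_left (le_trans (min_le_right _ _) h)
  have hvol : ∀ x : X, MeasureTheory.volume (I x) = ENNReal.ofReal (Qp K c α (f x)) := by
    intro x
    rw [hI]
    simp [Real.volume_Ico]
  have hsub : (⋃ x ∈ s, I x) ⊆ Set.Icc (0:ℝ) 1 := by
    intro t ht
    simp only [Set.mem_iUnion] at ht
    obtain ⟨x, _, hx⟩ := ht
    obtain ⟨h1, h2⟩ := hx
    have h3 := lep_nonneg (c := c) (α := α) (e := e) hK (f x)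
    have h4 := lep_add_Qp_le_one (c := c) (α := α) (e := e) hK hroot (f x)
    exact ⟨le_trans h3 h1, by linarith⟩
  have hmeas := MeasureTheory.measure_biUnion_finset (μ := MeasureTheory.volume) hd
    (fun x _ => measurableSet_Ico)
  have hle : ∑ x ∈ s, MeasureTheory.volume (I x) ≤ 1 := by
    rw [← hmeas]
    calc MeasureTheory.volume (⋃ x ∈ s, I x) ≤ MeasureTheory.volume (Set.Icc (0:ℝ) 1) :=
      MeasureTheory.measure_mono hsub
    _ = 1 := by simp [Real.volume_Icc]
  rw [Finset.sum_congr rfl (fun x _ => hvol x)] at hle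
  rw [← ENNReal.ofReal_sum_of_nonneg (fun x _ => (Qp_pos (c := c) (α := α) hK (f x)).le)] at hle
  have := ENNReal.ofReal_le_ofReal_iff (p := ∑ x ∈ s, Qp K c α (f x)) (q := 1) (by norm_num)
  rw [← ENNReal.ofReal_one]
  at hle
  exact this.mp hle


section probs
variable {X : Type*} {P : X → ℝ}

lemma prob_nonneg (hP0 : ∀ x, 0 ≤ P x) (S : Set X) : 0 ≤ prob P S :=
  tsum_nonneg fun x => Set.indicator_nonneg (fun y _ => hP0 y) x

lemma summable_indicator (hP1 : HasSum P 1) (S : Set X) : Summable (S.indicator P) :=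
  hP1.summable.indicator S

lemma prob_mono_support (hP0 : ∀ x, 0 ≤ P x) (hP1 : HasSum P 1) {S T : Set X}
    (h : ∀ x, x ∈ S → 0 < P x → x ∈ T) : prob P S ≤ prob P T := by
  apply Summable.tsum_le_tsum _ (summable_indicator hP1 S) (summable_indicator hP1 T)
  intro x
  by_cases hx : x ∈ S
  · rcases lt_or_eq_of_le (hP0 x) with hp | hp
    · rw [Set.indicator_of_mem hx, Set.indicator_of_mem (h x hx hp)]
    · rw [Set.indicator_of_mem hx, ← hp]
      exact Set.indicator_nonneg (fun y _ => hP0 y) x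
  · rw [Set.indicator_of_notMem hx]
    exact Set.indicator_nonneg (fun y _ => hP0 y) x

lemma prob_le_one (hP0 : ∀ x, 0 ≤ P x) (hP1 : HasSum P 1) (S : Set X) :
    prob P S ≤ 1 := by
  rw [show (1:ℝ) = ∑' x, P x from (hP1.tsum_eq).symm]
  apply Summable.tsum_le_tsum _ (summable_indicator hP1 S) hP1.summable
  intro x
  exact Set.indicator_le_self' (fun y _ => hP0 y) x

lemma prob_univ (hP1 : HasSum P 1) : prob P (Set.univ : Set X) = 1 := by
  rw [prob]
  simp only [Set.indicator_univ]
  exact hP1.tsum_eq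

lemma prob_union_le (hP0 : ∀ x, 0 ≤ P x) (hP1 : HasSum P 1) (S T : Set X) :
    prob P (S ∪ T) ≤ prob P S + prob P T := by
  rw [show prob P S + prob P T = ∑' x, (S.indicator P x + T.indicator P x) from
    (Summable.tsum_add (summable_indicator hP1 S) (summable_indicator hP1 T)).symm]
  apply Summable.tsum_le_tsum _ (summable_indicator hP1 (S ∪ T))
    ((summable_indicator hP1 S).add (summable_indicator hP1 T))
  intro x
  by_cases hx : x ∈ S ∪ T
  · rw [Set.indicator_of_mem hx]
    rcases hx with hx | hx
    · rw [Set.indicator_of_mem hx]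
      have := Set.indicator_nonneg (fun y _ => hP0 y) (s := T) x
      linarith
    · rw [Set.indicator_of_mem (s := T) hx]
      have := Set.indicator_nonneg (fun y _ => hP0 y) (s := S) x
      linarith
  · rw [Set.indicator_of_notMem hx]
    have h1 := Set.indicator_nonneg (fun y _ => hP0 y) (s := S) x
    have h2 := Set.indicator_nonneg (fun y _ => hP0 y) (s := T) x
    linarith

lemma prob_le_of_le (hP0 : ∀ x, 0 ≤ P x) (hP1 : HasSum P 1) (S : Set X) (g : X → ℝ)
    (hg : ∀ x, 0 ≤ g x) (hle : ∀ x ∈ S, P x ≤ g x) {B : ℝ}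
    (hB : ∀ s : Finset X, ∑ x ∈ s, g x ≤ B) : prob P S ≤ B := by
  apply Summable.tsum_le_of_sum_le (summable_indicator hP1 S)
  intro s
  calc ∑ x ∈ s, S.indicator P x ≤ ∑ x ∈ s, g x := by
        apply Finset.sum_le_sum
        intro x _
        by_cases hx : x ∈ S
        · rw [Set.indicator_of_mem hx]; exact hle x hx
        · rw [Set.indicator_of_notMem hx]; exact hg x
  _ ≤ B := hB s

end probs

end basic
end OverflowProof
end

open OverflowProof Filter in
/-- General formula for the infimum of ε-achievable (first-order) overflow thresholds:
`R(ε|X) = inf { R : F(R) ≤ ε }`. -/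
theorem first_order_overflow_threshold {U : Type*} [Fintype U] (K : ℕ) (hK : 2 ≤ K)
    (hcard : Fintype.card U = K) (c : U → ℝ) (hc : ∀ u, 0 < c u)
    (α : ℝ) (hα : 0 < α) (hroot : ∑ u : U, (K : ℝ) ^ (-(α * c u)) = 1)
    (𝒳 : ℕ → Type) [∀ n, Countable (𝒳 n)]
    (P : ∀ n, 𝒳 n → ℝ) (hP0 : ∀ n x, 0 ≤ P n x) (hP1 : ∀ n, HasSum (P n) 1)
    (ε : ℝ) (hε0 : 0 ≤ ε) (hε1 : ε < 1) :
    sInf {R : ℝ | 0 < R ∧ ∃ φ : ∀ n, 𝒳 n → List U,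
        (∀ n, Function.Injective (φ n)) ∧ (∀ n x, φ n x ≠ []) ∧
        (∀ n x y, φ n x <+: φ n y → φ n x = φ n y) ∧
        Filter.limsup (fun n => prob (P n) {x | (n : ℝ) * R < strCost c (φ n x)})
          Filter.atTop ≤ ε}
      = sInf {R : ℝ |
          Filter.limsup
            (fun n => prob (P n)
              {x | R ≤ 1 / ((n : ℝ) * α) * Real.logb K (P n x)⁻¹})
            Filter.atTop ≤ ε} := by
  classical
  have hroot' : ∑ u : U, qv K c α u = 1 := hroot
  have hK1 : (1:ℝ) < K := oneltK hK
  have hKpos : (0:ℝ) < K := by positivity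
  set e : U ≃ Fin K := Fintype.equivFinOfCardEq hcard with he
  haveI hne : Nonempty U := ⟨e.symm ⟨0, by omega⟩⟩
  set qm : ℝ := Finset.univ.inf' Finset.univ_nonempty (qv K c α) with hqmdef
  have hqm : ∀ u, qm ≤ qv K c α u := fun u => Finset.inf'_le _ (Finset.mem_univ u)
  have hqm0 : 0 < qm := by
    obtain ⟨u, _, hu⟩ := Finset.exists_mem_eq_inf' Finset.univ_nonempty (qv K c α)
    rw [hqmdef, hu]
    exact qv_pos hK u
  set qM : ℝ := Finset.univ.sup' Finset.univ_nonempty (qv K c α) with hqMdef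
  have hqM : ∀ u, qv K c α u ≤ qM := fun u => Finset.le_sup' _ (Finset.mem_univ u)
  have hqM1 : qM < 1 := by
    obtain ⟨u, _, hu⟩ := Finset.exists_mem_eq_sup' Finset.univ_nonempty (qv K c α)
    rw [hqMdef, hu]
    exact qv_lt_one hK hc hα u
  set CC : ℝ := (1/α) * Real.logb K (2/(qm*qm)) with hCC
  set A : Set ℝ := {R : ℝ | 0 < R ∧ ∃ φ : ∀ n, 𝒳 n → List U,
        (∀ n, Function.Injective (φ n)) ∧ (∀ n x, φ n x ≠ []) ∧
        (∀ n x y, φ n x <+: φ n y → φ n x = φ n y) ∧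
        Filter.limsup (fun n => prob (P n) {x | (n : ℝ) * R < strCost c (φ n x)})
          Filter.atTop ≤ ε} with hA
  set Bs : Set ℝ := {R : ℝ |
          Filter.limsup
            (fun n => prob (P n)
              {x | R ≤ 1 / ((n : ℝ) * α) * Real.logb K (P n x)⁻¹})
            Filter.atTop ≤ ε} with hB
  have hPle1 : ∀ n x, P n x ≤ 1 := fun n x =>
    le_hasSum (hP1 n) x fun y _ => hP0 n y
  -- boundedness facts for limsups of probabilities
  have hbdd : ∀ (S : ∀ n, Set (𝒳 n)),
      IsBoundedUnder (· ≤ ·) (atTop : Filter ℕ) (fun n => prob (P n) (S n)) :=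
    fun S => ⟨1, eventually_map.mpr
      (Eventually.of_forall fun n => prob_le_one (hP0 n) (hP1 n) (S n))⟩
  have hcobdd : ∀ (S : ∀ n, Set (𝒳 n)),
      IsCoboundedUnder (· ≤ ·) (atTop : Filter ℕ) (fun n => prob (P n) (S n)) :=
    fun S => IsBoundedUnder.isCoboundedUnder_le
      ⟨0, eventually_map.mpr
        (Eventually.of_forall fun n => prob_nonneg (hP0 n) (S n))⟩
  -- every element of Bs is positive
  have hBpos : ∀ R ∈ Bs, 0 < R := by
    intro R hR
    by_contra hcon
    push_neg at hcon
    have hall : ∀ n : ℕ,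
        prob (P n) {x | R ≤ 1 / ((n : ℝ) * α) * Real.logb K (P n x)⁻¹} = 1 := by
      intro n
      have hset : {x : 𝒳 n | R ≤ 1 / ((n : ℝ) * α) * Real.logb K (P n x)⁻¹}
          = Set.univ := by
        apply Set.eq_univ_of_forall
        intro x
        show R ≤ 1 / ((n : ℝ) * α) * Real.logb K (P n x)⁻¹
        have hnn : 0 ≤ 1 / ((n : ℝ) * α) * Real.logb K (P n x)⁻¹ := by
          rcases eq_or_lt_of_le (hP0 n x) with hp | hp
          · rw [← hp]
            simp
          · apply mul_nonneg (by positivity)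
            apply Real.logb_nonneg hK1
            rw [le_inv_comm₀ one_pos hp]
            simpa using hPle1 n x
        linarith
      rw [hset, prob_univ (hP1 n)]
    rw [hB, Set.mem_setOf_eq] at hR
    simp_rw [hall] at hR
    rw [limsup_const] at hR
    linarith
  -- DIRECT PART
  have hdirect : ∀ R ∈ Bs, ∀ γ : ℝ, 0 < γ → R + γ ∈ A := by
    intro R hRB γ hγ
    have hR0 := hBpos R hRB
    choose φ hinj hnenil hpf hcost using fun n =>
      exists_good_code (c := c) (α := α) e hK hc hα hroot' hqm0 hqm hqM hqM1
        (P n) (hP0 n) (hP1 n)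
    refine ⟨by linarith, φ, hinj, hnenil, hpf, ?_⟩
    obtain ⟨N, hN⟩ := exists_nat_ge (CC / γ)
    have hmono : ∀ᶠ n in atTop,
        prob (P n) {x | (n : ℝ) * (R + γ) < strCost c (φ n x)} ≤
          prob (P n) {x | R ≤ 1 / ((n : ℝ) * α) * Real.logb K (P n x)⁻¹} := by
      filter_upwards [eventually_ge_atTop (max 1 N)] with n hn
      have hn1 : (1:ℝ) ≤ (n:ℝ) := by
        have : 1 ≤ n := le_trans (le_max_left _ _) hn
        exact_mod_cast this
      have hnN : (N:ℝ) ≤ (n:ℝ) := by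
        have : N ≤ n := le_trans (le_max_right _ _) hn
        exact_mod_cast this
      have hCCle : CC ≤ (n:ℝ) * γ := by
        have h1 : CC / γ ≤ (n:ℝ) := le_trans hN hnN
        rwa [div_le_iff₀ hγ] at h1
      apply prob_mono_support (hP0 n) (hP1 n)
      intro x hx hp
      have hcb := hcost n x hp
      have hx' : (n : ℝ) * (R + γ) < strCost c (φ n x) := hx
      have hkey : (n:ℝ) * R < (1/α) * Real.logb K (P n x)⁻¹ := by nlinarith
      have hnα : (0:ℝ) < (n:ℝ) * α := by positivity
      have h2 : R * ((n:ℝ) * α) ≤ Real.logb K (P n x)⁻¹ := by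
        have h3 := mul_lt_mul_of_pos_left hkey hα
        have h4 : α * (1 / α * Real.logb K (P n x)⁻¹) = Real.logb K (P n x)⁻¹ := by
          field_simp
        nlinarith
      show R ≤ 1 / ((n : ℝ) * α) * Real.logb K (P n x)⁻¹
      rw [one_div_mul_eq_div, le_div_iff₀ hnα]
      exact h2
    calc limsup (fun n => prob (P n) {x | (n : ℝ) * (R + γ) < strCost c (φ n x)}) atTop
        ≤ limsup (fun n => prob (P n)
            {x | R ≤ 1 / ((n : ℝ) * α) * Real.logb K (P n x)⁻¹}) atTop :=
          limsup_le_limsup hmono (hcobdd _) (hbdd _)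
      _ ≤ ε := hRB
  -- CONVERSE PART
  have hconv : ∀ R ∈ A, ∀ γ : ℝ, 0 < γ → R + γ ∈ Bs := by
    intro R hRA γ hγ
    obtain ⟨hR0, φ, hinj, hnenil, hpf, hlim⟩ := hRA
    set r : ℝ := (K:ℝ) ^ (-(α * γ)) with hr
    have hr0 : 0 < r := Real.rpow_pos_of_pos hKpos _
    have hr1 : r < 1 := Real.rpow_lt_one_of_one_lt_of_neg hK1 (by nlinarith)
    have hkey : ∀ n : ℕ, 1 ≤ n →
        prob (P n) {x | R + γ ≤ 1 / ((n : ℝ) * α) * Real.logb K (P n x)⁻¹} ≤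
          prob (P n) {x | (n : ℝ) * R < strCost c (φ n x)} + r ^ n := by
      intro n hn
      have hn0 : (0:ℝ) < n := by exact_mod_cast hn
      have hnα : (0:ℝ) < (n:ℝ) * α := by positivity
      set S := {x : 𝒳 n | R + γ ≤ 1 / ((n : ℝ) * α) * Real.logb K (P n x)⁻¹} with hS
      set T1 := {x : 𝒳 n | (n : ℝ) * R < strCost c (φ n x)} with hT1
      set T2 := {x : 𝒳 n | R + γ ≤ 1 / ((n : ℝ) * α) * Real.logb K (P n x)⁻¹ ∧
        strCost c (φ n x) ≤ (n : ℝ) * R} with hT2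
      have hsub : prob (P n) S ≤ prob (P n) (T1 ∪ T2) := by
        apply prob_mono_support (hP0 n) (hP1 n)
        intro x hx _
        by_cases hcase : (n : ℝ) * R < strCost c (φ n x)
        · exact Or.inl hcase
        · exact Or.inr ⟨hx, le_of_not_gt hcase⟩
      have hT2le : prob (P n) T2 ≤ r ^ n := by
        apply prob_le_of_le (hP0 n) (hP1 n) T2
          (fun x => Qp K c α (φ n x) * r ^ n)
          (fun x => mul_nonneg (Qp_pos (c := c) (α := α) hK _).le (by positivity))
        · intro x hx
          rcases eq_or_lt_of_le (hP0 n x) with hp | hp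
          · rw [← hp]
            exact mul_nonneg (Qp_pos (c := c) (α := α) hK _).le (by positivity)
          · obtain ⟨hx1, hx2⟩ := hx
            have hL : (n:ℝ) * α * (R + γ) ≤ Real.logb K (P n x)⁻¹ := by
              rw [show (1:ℝ) / ((n:ℝ) * α) * Real.logb K (P n x)⁻¹
                = Real.logb K (P n x)⁻¹ / ((n:ℝ)*α) by ring] at hx1
              rw [le_div_iff₀ hnα] at hx1
              linarith [hx1]
            have hPinv : (K:ℝ) ^ ((n:ℝ) * α * (R + γ)) ≤ (P n x)⁻¹ := by
              have h1 : (K:ℝ) ^ ((n:ℝ) * α * (R + γ)) ≤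
                  (K:ℝ) ^ (Real.logb K (P n x)⁻¹) :=
                (Real.rpow_le_rpow_left_iff hK1).mpr hL
              rwa [Real.rpow_logb hKpos (by linarith) (inv_pos.mpr hp)] at h1
            have hPle : P n x ≤ (K:ℝ) ^ (-((n:ℝ) * α * (R + γ))) := by
              rw [Real.rpow_neg hKpos.le]
              rw [← inv_inv (P n x)]
              apply inv_anti₀ (Real.rpow_pos_of_pos hKpos _) hPinv
            have hsplitexp : (K:ℝ) ^ (-((n:ℝ) * α * (R + γ)))
                = (K:ℝ) ^ (-(α * ((n:ℝ) * R))) * r ^ n := by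
              have h2 : r ^ n = (K:ℝ) ^ ((-(α * γ)) * (n:ℝ)) := by
                rw [Real.rpow_mul hKpos.le, ← hr, Real.rpow_natCast]
              rw [h2, ← Real.rpow_add hKpos]
              congr 1
              ring
            have hQge : (K:ℝ) ^ (-(α * ((n:ℝ) * R))) ≤ Qp K c α (φ n x) := by
              rw [Qp_eq_rpow hK]
              apply (Real.rpow_le_rpow_left_iff hK1).mpr
              nlinarith
            calc P n x ≤ (K:ℝ) ^ (-((n:ℝ) * α * (R + γ))) := hPle
              _ = (K:ℝ) ^ (-(α * ((n:ℝ) * R))) * r ^ n := hsplitexp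
              _ ≤ Qp K c α (φ n x) * r ^ n :=
                mul_le_mul_of_nonneg_right hQge (by positivity)
        · intro s
          rw [← Finset.sum_mul]
          have hkraft : ∑ x ∈ s, Qp K c α (φ n x) ≤ 1 :=
            finite_kraft e hK hroot' (φ n)
              (fun x y hxy hpre => hxy (hinj n (hpf n x y hpre))) s (hinj n)
          calc (∑ x ∈ s, Qp K c α (φ n x)) * r ^ n ≤ 1 * r ^ n :=
              mul_le_mul_of_nonneg_right hkraft (by positivity)
            _ = r ^ n := one_mul _
      calc prob (P n) S ≤ prob (P n) (T1 ∪ T2) := hsub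
        _ ≤ prob (P n) T1 + prob (P n) T2 := prob_union_le (hP0 n) (hP1 n) _ _
        _ ≤ prob (P n) T1 + r ^ n := by linarith
    rw [hB, Set.mem_setOf_eq]
    apply le_of_forall_pos_le_add
    intro η hη
    have hev1 : ∀ᶠ n in atTop,
        prob (P n) {x | (n : ℝ) * R < strCost c (φ n x)} < ε + η/2 := by
      apply eventually_lt_of_limsup_lt (lt_of_le_of_lt hlim (by linarith)) (hbdd _)
    have hev2 : ∀ᶠ n : ℕ in atTop, r ^ n < η/2 :=
      (tendsto_pow_atTop_nhds_zero_of_lt_one hr0.le hr1).eventually_lt_const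
        (by linarith)
    apply limsup_le_of_le (hcobdd _)
    filter_upwards [hev1, hev2, eventually_ge_atTop 1] with n h1 h2 h3
    calc prob (P n) {x | R + γ ≤ 1 / ((n : ℝ) * α) * Real.logb K (P n x)⁻¹}
        ≤ prob (P n) {x | (n : ℝ) * R < strCost c (φ n x)} + r ^ n := hkey n h3
      _ ≤ (ε + η/2) + η/2 := by linarith
      _ = ε + η := by ring
  -- ASSEMBLY
  have hAbdd : BddBelow A := ⟨0, fun R hR => hR.1.le⟩
  have hBbdd : BddBelow Bs := ⟨0, fun R hR => (hBpos R hR).le⟩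
  show sInf A = sInf Bs
  by_cases hAne : A.Nonempty
  · obtain ⟨R₀, hR₀⟩ := hAne
    have hBne : Bs.Nonempty := ⟨R₀ + 1, hconv R₀ hR₀ 1 one_pos⟩
    apply le_antisymm
    · apply le_csInf hBne
      intro R hRB
      apply le_of_forall_pos_le_add
      intro γ hγ
      exact csInf_le hAbdd (hdirect R hRB γ hγ)
    · apply le_csInf ⟨R₀, hR₀⟩
      intro R hRA
      apply le_of_forall_pos_le_add
      intro γ hγ
      exact csInf_le hBbdd (hconv R hRA γ hγ)
  · have hBe : Bs = ∅ := by
      rw [Set.eq_empty_iff_forall_notMem]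
      intro R hRB
      exact hAne ⟨R + 1, hdirect R hRB 1 one_pos⟩
    rw [Set.not_nonempty_iff_eq_empty] at hAne
    rw [hAne, hBe]
end

section
/- For a general source X, the infimum of 0-achievable overflow thresholds satisfies R(0|X) = (1/α_c)·H̄(X), where H̄(X) = p-limsup_{n→∞} (1/n) log_K (1/P_{X^n}(X^n)) is the spectral sup-entropy rate. -/
open Finset

set_option linter.unusedSectionVars false

noncomputable def wt {U : Type*} (q : U → ℝ) (s : List U) : ℝ := (s.map q).prod

lemma wt_nil {U : Type*} (q : U → ℝ) : wt q ([] : List U) = 1 := by simp [wt]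

lemma wt_cons {U : Type*} (q : U → ℝ) (u : U) (s : List U) : wt q (u :: s) = q u * wt q s := by
  simp [wt]

lemma wt_pos {U : Type*} {q : U → ℝ} (hq : ∀ u, 0 < q u) (s : List U) : 0 < wt q s := by
  induction s with
  | nil => simp [wt]
  | cons u s ih => rw [wt_cons]; exact mul_pos (hq u) ih

section Coding
variable {U : Type*} [Fintype U] [LinearOrder U] [Nonempty U]

/-- cumulative weight below `u` -/
noncomputable def Qlt (q : U → ℝ) (u : U) : ℝ := ∑ v ∈ univ.filter (· < u), q v

lemma Qlt_nonneg {q : U → ℝ} (hq : ∀ u, 0 < q u) (u : U) : 0 ≤ Qlt q u :=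
  Finset.sum_nonneg fun v _ => (hq v).le

lemma Qlt_add_eq {q : U → ℝ} (u : U) :
    Qlt q u + q u = ∑ v ∈ insert u (univ.filter (· < u)), q v := by
  rw [Finset.sum_insert (by simp)]
  simp [Qlt, add_comm]

lemma Qlt_add_le_one {q : U → ℝ} (hq : ∀ u, 0 < q u) (hsum : ∑ u, q u = 1) (u : U) :
    Qlt q u + q u ≤ 1 := by
  classical
  rw [Qlt_add_eq, ← hsum]
  exact Finset.sum_le_sum_of_subset_of_nonneg (fun v _ => mem_univ v) fun v _ _ => (hq v).le

/-- existence of a digit whose interval contains r -/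
lemma exists_digit {q : U → ℝ} (hq : ∀ u, 0 < q u) (hsum : ∑ u, q u = 1)
    {r : ℝ} (h0 : 0 ≤ r) (h1 : r < 1) : ∃ u, Qlt q u ≤ r ∧ r < Qlt q u + q u := by
  classical
  have hne : (univ.filter (fun u => Qlt q u ≤ r)).Nonempty := by
    obtain ⟨u0, -, hu0⟩ := Finset.exists_min_image (univ : Finset U) id univ_nonempty
    refine ⟨u0, mem_filter.2 ⟨mem_univ _, ?_⟩⟩
    have he : univ.filter (· < u0) = ∅ := by
      apply Finset.filter_eq_empty_iff.2
      intro v _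
      simpa using hu0 v (mem_univ v)
    simp [Qlt, he, h0]
  obtain ⟨u, hu, hmax⟩ := Finset.exists_max_image _ id hne
  rw [mem_filter] at hu
  refine ⟨u, hu.2, ?_⟩
  by_contra hcon
  push_neg at hcon
  -- r ≥ Qlt u + q u
  by_cases htop : ∃ v, u < v
  · obtain ⟨w, hwmem, hw⟩ := Finset.exists_min_image (univ.filter (u < ·)) id
      (by obtain ⟨v, hv⟩ := htop; exact ⟨v, mem_filter.2 ⟨mem_univ _, hv⟩⟩)
    rw [mem_filter] at hwmem
    have hfil : univ.filter (· < w) = insert u (univ.filter (· < u)) := by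
      ext v
      simp only [mem_filter, mem_univ, true_and, Finset.mem_insert]
      constructor
      · intro hv
        rcases lt_or_ge v u with h | h
        · right; exact h
        · rcases eq_or_lt_of_le h with h' | h'
          · left; exact h'.symm
          · exact absurd (hw v (mem_filter.2 ⟨mem_univ _, h'⟩)) (by simpa using hv)
      · intro hv
        rcases hv with rfl | hv
        · exact hwmem.2
        · exact hv.trans hwmem.2
    have hQw : Qlt q w ≤ r := by
      rw [Qlt, hfil, ← Qlt_add_eq]
      exact hcon
    have := hmax w (mem_filter.2 ⟨mem_univ _, hQw⟩)
    simp only [id] at this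
    exact absurd hwmem.2 (not_lt.2 this)
  · push_neg at htop
    have hfil : insert u (univ.filter (· < u)) = univ := by
      ext v
      simp only [Finset.mem_insert, mem_filter, mem_univ, true_and, iff_true]
      rcases eq_or_lt_of_le (htop v) with h | h
      · left; exact h
      · right; exact h
    have : Qlt q u + q u = 1 := by rw [Qlt_add_eq, hfil, hsum]
    linarith

variable (q : U → ℝ)

/-- the digit of `r` -/
noncomputable def digit (r : ℝ) : U :=
  if h : ∃ u, Qlt q u ≤ r ∧ r < Qlt q u + q u then h.choose else Classical.arbitrary U

lemma digit_spec {q : U → ℝ} (hq : ∀ u, 0 < q u) (hsum : ∑ u, q u = 1)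
    {r : ℝ} (h0 : 0 ≤ r) (h1 : r < 1) :
    Qlt q (digit q r) ≤ r ∧ r < Qlt q (digit q r) + q (digit q r) := by
  have h := exists_digit hq hsum h0 h1
  rw [digit, dif_pos h]
  exact h.choose_spec

/-- the path (digit expansion) of `r` to depth `d` -/
noncomputable def path : ℕ → ℝ → List U
  | 0, _ => []
  | (d+1), r => digit q r :: path d ((r - Qlt q (digit q r)) / q (digit q r))

@[simp] lemma path_zero (r : ℝ) : path q 0 r = [] := rfl

lemma path_succ (d : ℕ) (r : ℝ) :
    path q (d+1) r = digit q r :: path q d ((r - Qlt q (digit q r)) / q (digit q r)) := rfl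

/-- base point of the interval of a string -/
noncomputable def base : List U → ℝ
  | [] => 0
  | (u :: s) => Qlt q u + q u * base s

@[simp] lemma base_nil : base q [] = 0 := rfl
lemma base_cons (u : U) (s : List U) : base q (u :: s) = Qlt q u + q u * base q s := rfl

lemma base_nonneg {q : U → ℝ} (hq : ∀ u, 0 < q u) (s : List U) : 0 ≤ base q s := by
  induction s with
  | nil => simp
  | cons u s ih =>
    rw [base_cons]
    have := Qlt_nonneg hq u
    nlinarith [(hq u)]

lemma base_add_wt_le_one {q : U → ℝ} (hq : ∀ u, 0 < q u) (hsum : ∑ u, q u = 1) (s : List U) :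
    base q s + wt q s ≤ 1 := by
  induction s with
  | nil => simp [wt_nil]
  | cons u s ih =>
    rw [base_cons, wt_cons]
    have h1 := Qlt_add_le_one hq hsum u
    nlinarith [(hq u)]

/-- the invariant: `r` lies in the interval of its path -/
lemma path_mem {q : U → ℝ} (hq : ∀ u, 0 < q u) (hsum : ∑ u, q u = 1) :
    ∀ (d : ℕ) {r : ℝ}, 0 ≤ r → r < 1 →
      base q (path q d r) ≤ r ∧ r < base q (path q d r) + wt q (path q d r) := by
  intro d
  induction d with
  | zero => intro r h0 h1; simpa [wt_nil] using ⟨h0, h1⟩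
  | succ d ih =>
    intro r h0 h1
    set u := digit q r with hu
    obtain ⟨hd1, hd2⟩ := digit_spec hq hsum h0 h1
    set r' := (r - Qlt q u) / q u with hr'
    have hqu := hq u
    have hr'0 : 0 ≤ r' := div_nonneg (by linarith) hqu.le
    have hr'1 : r' < 1 := by
      rw [hr', div_lt_one hqu]
      linarith
    obtain ⟨ih1, ih2⟩ := ih hr'0 hr'1
    have hr : r = Qlt q u + q u * r' := by
      rw [hr', mul_div_assoc', mul_comm, mul_div_assoc, div_self hqu.ne', mul_one]; ring
    rw [path_succ, base_cons, wt_cons, ← hu, ← hr']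
    constructor
    · nlinarith
    · nlinarith

lemma path_wt_le {q : U → ℝ} {θ : ℝ} (hq : ∀ u, 0 < q u) (hθ0 : 0 ≤ θ) (hqθ : ∀ u, q u ≤ θ) :
    ∀ (d : ℕ) (r : ℝ), wt q (path q d r) ≤ θ ^ d := by
  intro d
  induction d with
  | zero => intro r; simp [wt_nil]
  | succ d ih =>
    intro r
    rw [path_succ, wt_cons, pow_succ, mul_comm (θ ^ d) θ]
    exact mul_le_mul (hqθ _) (ih _) (wt_pos hq _).le hθ0

lemma path_wt_ge {q : U → ℝ} {m : ℝ} (hq : ∀ u, 0 < q u) (hm : ∀ u, m ≤ q u) :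
    ∀ (d : ℕ) (r : ℝ), m * wt q (path q d r) ≤ wt q (path q (d+1) r) := by
  intro d
  induction d with
  | zero =>
    intro r
    rw [path_succ, wt_cons]
    simp [wt_nil]
    exact hm _
  | succ d ih =>
    intro r
    rw [path_succ q (d+1), wt_cons, path_succ q d, wt_cons, ← mul_assoc, mul_comm m,
      mul_assoc]
    gcongr
    · exact (hq _).le
    · exact ih _

lemma path_prefix (d e : ℕ) (hde : d ≤ e) : ∀ (r : ℝ), path q d r <+: path q e r := by
  induction e generalizing d with
  | zero =>
    intro r
    interval_cases d
    simp
  | succ e ih =>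
    intro r
    rcases Nat.eq_or_lt_of_le hde with rfl | hlt
    · exact List.prefix_refl _
    · rcases Nat.exists_eq_succ_of_ne_zero (by omega : e + 1 ≠ 0) with ⟨e', he⟩
      rcases Nat.eq_zero_or_pos d with rfl | hd
      · simp [List.nil_prefix]
      · rcases Nat.exists_eq_succ_of_ne_zero (by omega : d ≠ 0) with ⟨d', hd'⟩
        subst hd'
        rw [path_succ, path_succ]
        exact List.cons_prefix_cons.2 ⟨rfl, ih d' (by omega) _⟩

lemma base_wt_nested {q : U → ℝ} (hq : ∀ u, 0 < q u) (hsum : ∑ u, q u = 1) :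
    ∀ (s t : List U), s <+: t →
      base q s ≤ base q t ∧ base q t + wt q t ≤ base q s + wt q s := by
  intro s
  induction s with
  | nil =>
    intro t _
    simp only [base_nil, wt_nil]
    exact ⟨base_nonneg hq t, by simpa using base_add_wt_le_one hq hsum t⟩
  | cons u s ih =>
    intro t ht
    rcases t with _ | ⟨v, t⟩
    · simpa using ht.length_le
    · obtain ⟨rfl, hst⟩ := List.cons_prefix_cons.1 ht
      obtain ⟨h1, h2⟩ := ih t hst
      rw [base_cons, base_cons, wt_cons, wt_cons]
      have := hq u
      constructor
      · nlinarith
      · nlinarith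

end Coding

open Finset in
lemma kraft_finset {U : Type*} [Fintype U] (q : U → ℝ) (hq : ∀ u, 0 < q u)
    (hsum : ∑ u, q u = 1) :
    ∀ (n : ℕ) (S : Finset (List U)), (∑ s ∈ S, s.length ≤ n) →
      (∀ s ∈ S, ∀ t ∈ S, s <+: t → s = t) → ∑ s ∈ S, wt q s ≤ 1 := by
  classical
  intro n
  induction n with
  | zero =>
    intro S hlen hanti
    -- every list in S has length 0, so S ⊆ {[]}
    have hs : S ⊆ {[]} := by
      intro s hs
      have : s.length = 0 := by
        have := Finset.single_le_sum (f := fun s : List U => s.length) (fun _ _ => Nat.zero_le _) hs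
        omega
      simpa [List.length_eq_zero_iff] using this
    calc ∑ s ∈ S, wt q s ≤ ∑ s ∈ ({[]} : Finset (List U)), wt q s := by
          apply Finset.sum_le_sum_of_subset_of_nonneg hs
          intro s _ _; exact (wt_pos hq s).le
      _ = 1 := by simp [wt_nil]
  | succ n ih =>
    intro S hlen hanti
    by_cases hnil : ([] : List U) ∈ S
    · -- S = {[]}
      have : S = {[]} := by
        apply Finset.eq_singleton_iff_unique_mem.2
        exact ⟨hnil, fun s hs => (hanti _ hnil _ hs List.nil_prefix).symm⟩
      simp [this, wt_nil]
    · -- all lists nonempty; split by head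
      have key : ∀ u : U, ∑ s ∈ S.filter (fun s => s.head? = some u), wt q s
          ≤ q u * 1 := by
        intro u
        set T := (S.filter (fun s => s.head? = some u)).image List.tail with hT
        have htail_inj : ∀ s ∈ S.filter (fun s => s.head? = some u),
            ∀ t ∈ S.filter (fun s => s.head? = some u), s.tail = t.tail → s = t := by
          intro s hs t ht hst
          simp only [Finset.mem_filter] at hs ht
          have h1 : u :: s.tail = s := List.cons_head?_tail (by simp [hs.2])
          have h2 : u :: t.tail = t := List.cons_head?_tail (by simp [ht.2])
          rw [← h1, ← h2, hst]
        have hTsum : ∑ s ∈ S.filter (fun s => s.head? = some u), wt q s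
            = q u * ∑ t ∈ T, wt q t := by
          rw [hT, Finset.mul_sum, Finset.sum_image htail_inj]
          apply Finset.sum_congr rfl
          intro s hs
          simp only [Finset.mem_filter] at hs
          have h1 : u :: s.tail = s := List.cons_head?_tail (by simp [hs.2])
          conv_lhs => rw [← h1]
          rw [wt_cons]
        rw [hTsum]
        gcongr
        · exact (hq u).le
        -- apply ih to T
        apply ih T
        · -- length bound
          by_cases hne : (S.filter (fun s => s.head? = some u)).Nonempty
          · have h1 : ∑ t ∈ T, t.length = ∑ s ∈ S.filter (fun s => s.head? = some u), s.tail.length := by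
              rw [hT, Finset.sum_image htail_inj]
            have h2 : ∀ s ∈ S.filter (fun s => s.head? = some u), s.tail.length + 1 = s.length := by
              intro s hs
              simp only [Finset.mem_filter] at hs
              have h1 : u :: s.tail = s := List.cons_head?_tail (by simp [hs.2])
              conv_rhs => rw [← h1]
              simp
            have h3 : ∑ s ∈ S.filter (fun s => s.head? = some u), s.length
                ≤ ∑ s ∈ S, s.length := Finset.sum_le_sum_of_subset (Finset.filter_subset _ _)
            obtain ⟨s0, hs0⟩ := hne
            have h4 : ∑ s ∈ S.filter (fun s => s.head? = some u), s.tail.length + 1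
                ≤ ∑ s ∈ S.filter (fun s => s.head? = some u), s.length := by
              calc ∑ s ∈ S.filter (fun s => s.head? = some u), s.tail.length + 1
                  ≤ ∑ s ∈ S.filter (fun s => s.head? = some u), (s.tail.length + 1) := by
                    rw [Finset.sum_add_distrib]
                    gcongr
                    simpa using Finset.card_pos.2 ⟨s0, hs0⟩
                _ = _ := Finset.sum_congr rfl (fun s hs => h2 s hs)
            omega
          · have : T = ∅ := by
              rw [hT, Finset.not_nonempty_iff_eq_empty.1 hne]; simp
            simp [this]
        · -- antichain
          intro t1 ht1 t2 ht2 hpre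
          rw [hT] at ht1 ht2
          obtain ⟨s1, hs1, rfl⟩ := Finset.mem_image.1 ht1
          obtain ⟨s2, hs2, rfl⟩ := Finset.mem_image.1 ht2
          simp only [Finset.mem_filter] at hs1 hs2
          have h1 : u :: s1.tail = s1 := List.cons_head?_tail (by simp [hs1.2])
          have h2 : u :: s2.tail = s2 := List.cons_head?_tail (by simp [hs2.2])
          have : s1 <+: s2 := by
            rw [← h1, ← h2]; exact List.cons_prefix_cons.2 ⟨rfl, hpre⟩
          have := hanti _ hs1.1 _ hs2.1 this
          rw [← h1, ← h2, this]
      have fib := Finset.sum_fiberwise (κ := Option U) S (fun s => s.head?) (wt q)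
      rw [Fintype.sum_option] at fib
      have hnone : S.filter (fun s => s.head? = none) = ∅ := by
        apply Finset.filter_eq_empty_iff.2
        intro s hs hhead
        rw [List.head?_eq_none_iff] at hhead
        exact hnil (hhead ▸ hs)
      rw [hnone] at fib
      simp only [Finset.sum_empty, zero_add] at fib
      calc ∑ s ∈ S, wt q s = ∑ u : U, ∑ s ∈ S.filter (fun s => s.head? = some u), wt q s :=
            fib.symm
        _ ≤ ∑ u : U, q u * 1 := Finset.sum_le_sum (fun u _ => key u)
        _ = 1 := by simp [hsum]

open Finset
set_option maxHeartbeats 1000000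

section GC
variable {U : Type*} [Fintype U] [LinearOrder U] [Nonempty U]
variable {E : Type*} [Countable E] [Nonempty E]

lemma exists_good_code {q : U → ℝ} (hq : ∀ u, 0 < q u) (hsum : ∑ u, q u = 1)
    {m θ : ℝ} (hm0 : 0 < m) (hmq : ∀ u, m ≤ q u) (hθ0 : 0 ≤ θ) (hθ1 : θ < 1)
    (hqθ : ∀ u, q u ≤ θ)
    (p : E → ℝ) (hp : ∀ x, 0 < p x) (hp1 : ∀ s : Finset E, ∑ x ∈ s, p x ≤ 1) :
    ∃ φ : E → List U, (∀ x y, φ x <+: φ y → x = y) ∧ (∀ x, φ x ≠ []) ∧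
      (∀ x, m * (p x / 2) < wt q (φ x)) := by
  classical
  obtain ⟨ι, hι⟩ := Countable.exists_injective_nat E
  -- summability of p
  have hsp : Summable p := summable_of_sum_le (fun x => (hp x).le) hp1
  have htp : ∑' x, p x ≤ 1 := Summable.tsum_le_of_sum_le hsp hp1
  -- extension of p along ι
  set P' : ℕ → ℝ := fun k => if h : ∃ x, ι x = k then p h.choose else 0 with hP'
  have hP'0 : ∀ k, 0 ≤ P' k := by
    intro k
    rw [hP']
    dsimp only
    split
    · exact (hp _).le
    · exact le_refl 0
  have hP'ι : ∀ x, P' (ι x) = p x := by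
    intro x
    have h : ∃ y, ι y = ι x := ⟨x, rfl⟩
    rw [hP']
    dsimp only
    rw [dif_pos h]
    congr 1
    exact hι h.choose_spec
  have hsupp : Function.support P' ⊆ Set.range ι := by
    intro k hk
    rw [Function.mem_support, hP'] at hk
    dsimp only at hk
    by_contra hcon
    apply hk
    rw [dif_neg]
    rintro ⟨x, rfl⟩
    exact hcon ⟨x, rfl⟩
  have hsP' : Summable P' := by
    rw [← hι.summable_iff (by intro k hk; by_contra h; exact hk (hsupp (Function.mem_support.2 h)))]
    apply hsp.congr
    intro x
    exact (hP'ι x).symm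
  have htP' : ∑' k, P' k ≤ 1 := by
    rw [← hι.tsum_eq hsupp]
    calc ∑' x, P' (ι x) = ∑' x, p x := by
          apply tsum_congr; exact hP'ι
      _ ≤ 1 := htp
  -- cumulative distribution
  set F : E → ℝ := fun x => ∑ j ∈ Finset.range (ι x), P' j with hF
  have hF0 : ∀ x, 0 ≤ F x := fun x => Finset.sum_nonneg fun j _ => hP'0 j
  have hFp : ∀ x, F x + p x ≤ 1 := by
    intro x
    have h1 : F x + p x = ∑ j ∈ Finset.range (ι x + 1), P' j := by
      rw [hF, Finset.sum_range_succ, hP'ι]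
    rw [h1]
    exact le_trans (Summable.sum_le_tsum _ (fun j _ => hP'0 j) hsP') htP'
  have hdisj : ∀ x y, ι x < ι y → F x + p x ≤ F y := by
    intro x y hxy
    have h1 : F x + p x = ∑ j ∈ Finset.range (ι x + 1), P' j := by
      rw [hF, Finset.sum_range_succ, hP'ι]
    rw [h1, hF]
    apply Finset.sum_le_sum_of_subset_of_nonneg
    · exact Finset.range_subset_range.2 hxy
    · exact fun j _ _ => hP'0 j
  -- the midpoint
  set t : E → ℝ := fun x => F x + p x / 2 with ht
  have ht0 : ∀ x, 0 ≤ t x := fun x => by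
    have := hF0 x; have := (hp x).le; rw [ht]; dsimp only; linarith
  have ht1 : ∀ x, t x < 1 := fun x => by
    have := hFp x; have := hp x; rw [ht]; dsimp only; linarith
  -- depth
  have hex : ∀ x : E, ∃ d : ℕ, wt q (path q d (t x)) ≤ p x / 2 := by
    intro x
    obtain ⟨d, hd⟩ := exists_pow_lt_of_lt_one (half_pos (hp x)) hθ1
    exact ⟨d, le_trans (path_wt_le hq hθ0 hqθ d (t x)) hd.le⟩
  set D : E → ℕ := fun x => Nat.find (hex x) with hD
  set φ : E → List U := fun x => path q (D x) (t x) with hφ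
  have hwle : ∀ x, wt q (φ x) ≤ p x / 2 := fun x => Nat.find_spec (hex x)
  have hD0 : ∀ x, D x ≠ 0 := by
    intro x hcon
    have := hwle x
    rw [hφ] at this
    dsimp only at this
    rw [hcon] at this
    simp only [path_zero, wt_nil] at this
    have hx1 : p x ≤ 1 := by
      have := hp1 {x}
      simpa using this
    linarith
  have hwgt : ∀ x, m * (p x / 2) < wt q (φ x) := by
    intro x
    obtain ⟨k, hk⟩ := Nat.exists_eq_succ_of_ne_zero (hD0 x)
    have hkk : Nat.find (hex x) = k + 1 := hk
    have hmin : ¬ (wt q (path q k (t x)) ≤ p x / 2) :=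
      Nat.find_min (hex x) (by omega)
    push_neg at hmin
    have h2 : m * wt q (path q k (t x)) ≤ wt q (path q (k+1) (t x)) :=
      path_wt_ge hq hmq k (t x)
    have : φ x = path q (k+1) (t x) := by rw [hφ]; dsimp only; rw [hk]
    rw [this]
    calc m * (p x / 2) < m * wt q (path q k (t x)) := by
          apply mul_lt_mul_of_pos_left hmin hm0
      _ ≤ _ := h2
  -- interval containment: J(φ x) ⊆ (F x, F x + p x)
  have hmem : ∀ x, base q (φ x) ≤ t x ∧ t x < base q (φ x) + wt q (φ x) := fun x =>
    path_mem hq hsum (D x) (ht0 x) (ht1 x)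
  have hJ : ∀ x (z : ℝ), base q (φ x) ≤ z → z < base q (φ x) + wt q (φ x) →
      F x < z ∧ z < F x + p x := by
    intro x z hz1 hz2
    obtain ⟨h1, h2⟩ := hmem x
    have h3 := hwle x
    have h4 : 0 < wt q (φ x) := wt_pos hq _
    rw [ht] at h1 h2
    dsimp only at h1 h2
    constructor
    · nlinarith
    · nlinarith
  -- prefix-freeness
  have hpf : ∀ x y, φ x <+: φ y → x = y := by
    intro x y hpre
    by_contra hne
    obtain ⟨n1, n2⟩ := base_wt_nested hq hsum _ _ hpre
    -- t y lies in J(φ y) ⊆ J(φ x) ⊆ (F x, F x + p x)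
    obtain ⟨hy1, hy2⟩ := hmem y
    have hz := hJ x (t y) (le_trans n1 hy1) (lt_of_lt_of_le hy2 n2)
    have hzy : F y < t y ∧ t y < F y + p y := by
      rw [ht]; dsimp only
      constructor
      · have := hp y; linarith
      · have := hp y; linarith
    have hιne : ι x ≠ ι y := fun h => hne (hι h)
    rcases Nat.lt_or_ge (ι x) (ι y) with h | h
    · have := hdisj x y h
      linarith [hz.2, hzy.1]
    · have := hdisj y x (by omega)
      linarith [hz.1, hzy.2]
  refine ⟨φ, hpf, ?_, hwgt⟩
  intro x
  obtain ⟨k, hk⟩ := Nat.exists_eq_succ_of_ne_zero (hD0 x)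
  have : φ x = path q (k+1) (t x) := by rw [hφ]; dsimp only; rw [hk]
  rw [this, path_succ]
  simp
end GC




section ProbLemmas
variable {X : Type*} {P : X → ℝ}

lemma prob_nonneg (hP0 : ∀ x, 0 ≤ P x) (S : Set X) : 0 ≤ prob P S :=
  tsum_nonneg fun x => Set.indicator_nonneg (fun y _ => hP0 y) x

lemma prob_le_one (hP0 : ∀ x, 0 ≤ P x) (hP1 : HasSum P 1) (S : Set X) : prob P S ≤ 1 := by
  have h := Summable.tsum_le_tsum (f := S.indicator P) (g := P)
    (fun x => Set.indicator_le_self' (fun y _ => hP0 y) x) (hP1.summable.indicator S) hP1.summable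
  calc prob P S ≤ ∑' x, P x := h
    _ = 1 := hP1.tsum_eq

lemma prob_mono (hP0 : ∀ x, 0 ≤ P x) (hP1 : Summable P) {S T : Set X}
    (hST : ∀ x, x ∈ S → 0 < P x → x ∈ T) : prob P S ≤ prob P T := by
  apply Summable.tsum_le_tsum _ (hP1.indicator S) (hP1.indicator T)
  intro x
  by_cases hx : x ∈ S
  · rcases lt_or_eq_of_le (hP0 x) with h | h
    · rw [Set.indicator_of_mem hx, Set.indicator_of_mem (hST x hx h)]
    · have h1 : S.indicator P x ≤ P x := Set.indicator_le_self' (fun y _ => hP0 y) x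
      have h2 : 0 ≤ T.indicator P x := Set.indicator_nonneg (fun y _ => hP0 y) x
      rw [← h] at h1
      exact le_trans h1 h2
  · rw [Set.indicator_of_notMem hx]
    exact Set.indicator_nonneg (fun y _ => hP0 y) x

end ProbLemmas

lemma strCost_cons {U : Type*} (c : U → ℝ) (u : U) (s : List U) :
    strCost c (u :: s) = c u + strCost c s := by simp [strCost]

lemma wt_eq_rpow {U : Type*} {K : ℕ} (hK : 2 ≤ K) (c : U → ℝ) (α : ℝ) (s : List U) :
    wt (fun u => (K : ℝ) ^ (-(α * c u))) s = (K : ℝ) ^ (-(α * strCost c s)) := by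
  have hK0 : (0:ℝ) < K := by positivity
  induction s with
  | nil => simp [wt_nil, strCost]
  | cons u s ih =>
    rw [wt_cons, ih, strCost_cons, ← Real.rpow_add hK0]
    ring_nf


lemma nonempty_of_hasSum_one {E : Type*} {P : E → ℝ} (h : HasSum P 1) : Nonempty E := by
  by_contra hcon
  rw [not_nonempty_iff] at hcon
  haveI := hcon
  have h0 : HasSum P 0 := hasSum_empty
  exact one_ne_zero (h.unique h0)

lemma geom_sum_aux {E : Type*} (ι : E → ℕ) (hι : Function.Injective ι) (s : Finset E) :
    ∑ x ∈ s, ((1:ℝ)/2)^(ι x + 2) ≤ 1/2 := by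
  classical
  have h1 : ∑ x ∈ s, ((1:ℝ)/2)^(ι x + 2) = ∑ j ∈ s.image ι, ((1:ℝ)/2)^(j + 2) :=
    (Finset.sum_image (g := ι) (f := fun j : ℕ => ((1:ℝ)/2)^(j + 2)) (fun x _ y _ h => hι h)).symm
  rw [h1]
  have hinj2 : Function.Injective (fun j : ℕ => j + 2) := fun a b h => by simpa using h
  have hsummable : Summable (fun j : ℕ => ((1:ℝ)/2)^(j + 2)) :=
    Summable.comp_injective summable_geometric_two hinj2
  calc ∑ j ∈ s.image ι, ((1:ℝ)/2)^(j + 2) ≤ ∑' j : ℕ, ((1:ℝ)/2)^(j + 2) :=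
        Summable.sum_le_tsum _ (fun j _ => by positivity) hsummable
    _ = ∑' j : ℕ, ((1:ℝ)/4) * ((1:ℝ)/2)^j := by
        apply tsum_congr; intro j; ring
    _ = (1/4) * 2 := by rw [tsum_mul_left, tsum_geometric_two]
    _ = 1/2 := by norm_num

lemma direct_part {U : Type*} [Fintype U] [LinearOrder U] {K : ℕ} (hK : 2 ≤ K)
    (hcard : Fintype.card U = K) (c : U → ℝ) {α : ℝ} (hα : 0 < α)
    (hroot : ∑ u : U, (K : ℝ) ^ (-(α * c u)) = 1)
    (𝒳 : ℕ → Type) [∀ n, Countable (𝒳 n)]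
    (P : ∀ n, 𝒳 n → ℝ) (hP0 : ∀ n x, 0 ≤ P n x) (hP1 : ∀ n, HasSum (P n) 1)
    {β R : ℝ} (hR : 0 < R) (hβR : β < α * R)
    (hβ : Filter.Tendsto
      (fun n => prob (P n) {x | β < (1 / (n : ℝ)) * Real.logb K (P n x)⁻¹})
      Filter.atTop (nhds 0)) :
    ∃ φ : ∀ n, 𝒳 n → List U, (∀ n, Function.Injective (φ n)) ∧ (∀ n x, φ n x ≠ []) ∧
      (∀ n x y, φ n x <+: φ n y → φ n x = φ n y) ∧
      Filter.limsup (fun n => prob (P n) {x | (n : ℝ) * R < strCost c (φ n x)})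
        Filter.atTop ≤ 0 := by
  classical
  haveI : Nonempty U := Fintype.card_pos_iff.1 (by omega)
  haveI : ∀ n, Nonempty (𝒳 n) := fun n => nonempty_of_hasSum_one (hP1 n)
  have hK1 : (1:ℝ) < K := by exact_mod_cast hK.trans_lt' one_lt_two
  have hK0 : (0:ℝ) < K := lt_trans one_pos hK1
  set q : U → ℝ := fun u => (K : ℝ) ^ (-(α * c u)) with hqdef
  have hq : ∀ u, 0 < q u := fun u => Real.rpow_pos_of_pos hK0 _
  have hsum : ∑ u, q u = 1 := hroot
  -- min and max weights
  obtain ⟨u0, -, hu0⟩ := Finset.exists_min_image Finset.univ q Finset.univ_nonempty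
  set m : ℝ := q u0 with hm
  have hm0 : 0 < m := hq u0
  have hmq : ∀ u, m ≤ q u := fun u => hu0 u (Finset.mem_univ u)
  obtain ⟨u1, -, hu1⟩ := Finset.exists_max_image Finset.univ q Finset.univ_nonempty
  set θ : ℝ := q u1 with hθ
  have hqθ : ∀ u, q u ≤ θ := fun u => hu1 u (Finset.mem_univ u)
  have hθ0 : 0 ≤ θ := (hq u1).le
  have hθ1 : θ < 1 := by
    obtain ⟨v, hv⟩ := Fintype.exists_ne_of_one_lt_card (by omega) u1
    have hsub : ({u1, v} : Finset U) ⊆ Finset.univ := fun w _ => Finset.mem_univ w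
    have h2 : q u1 + q v ≤ ∑ u, q u := by
      rw [← Finset.sum_pair (Ne.symm hv)]
      exact Finset.sum_le_sum_of_subset_of_nonneg hsub fun w _ _ => (hq w).le
    rw [hsum] at h2
    have := hq v
    linarith
  -- tilted distributions and codes
  have code : ∀ n, ∃ φn : 𝒳 n → List U, (∀ x y, φn x <+: φn y → x = y) ∧ (∀ x, φn x ≠ []) ∧
      (∀ x, m * (P n x / 4) < wt q (φn x)) := by
    intro n
    obtain ⟨ι, hι⟩ := Countable.exists_injective_nat (𝒳 n)
    set p : 𝒳 n → ℝ := fun x => P n x / 2 + (1/2)^(ι x + 2) with hp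
    have hp0 : ∀ x, 0 < p x := by
      intro x
      have h1 := hP0 n x
      have h2 : (0:ℝ) < (1/2)^(ι x + 2) := by positivity
      rw [hp]; dsimp only; linarith
  -- finite sums of p are at most 1
    have hp1 : ∀ s : Finset (𝒳 n), ∑ x ∈ s, p x ≤ 1 := by
      intro s
      rw [hp]
      dsimp only
      rw [Finset.sum_add_distrib]
      have h1 : ∑ x ∈ s, P n x / 2 ≤ 1/2 := by
        rw [← Finset.sum_div]
        have : ∑ x ∈ s, P n x ≤ 1 := by
          have := Summable.sum_le_tsum s (fun x _ => hP0 n x) (hP1 n).summable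
          rwa [(hP1 n).tsum_eq] at this
        linarith
      have h2 := geom_sum_aux ι hι s
      linarith
    obtain ⟨φn, hpf, hnil, hwt⟩ := exists_good_code hq hsum hm0 hmq hθ0 hθ1 hqθ p hp0 hp1
    refine ⟨φn, hpf, hnil, fun x => ?_⟩
    have h1 := hwt x
    have h2 : P n x / 4 ≤ p x / 2 := by
      rw [hp]; dsimp only
      have : (0:ℝ) ≤ (1/2)^(ι x + 2) := by positivity
      linarith
    calc m * (P n x / 4) ≤ m * (p x / 2) := by nlinarith
      _ < wt q (φn x) := h1
  choose φ hpf hnil hwt using code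
  have hKne1 : (K:ℝ) ≠ 1 := ne_of_gt hK1
  -- cost bound: for x with P n x > 0 and n*R < strCost c (φ n x), info is large
  set C0 : ℝ := Real.logb K ((m/4)⁻¹) with hC0
  have hcost : ∀ n x, 0 < P n x →
      α * strCost c (φ n x) < C0 + Real.logb K (P n x)⁻¹ := by
    intro n x hx
    have h1 : m * (P n x / 4) < wt q (φ n x) := hwt n x
    have h2 : wt q (φ n x) = (K:ℝ) ^ (-(α * strCost c (φ n x))) := wt_eq_rpow hK c α _
    have h3 : (0:ℝ) < m * (P n x / 4) := by positivity
    have h4 := Real.logb_lt_logb hK1 h3 (h2 ▸ h1)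
    rw [Real.logb_rpow hK0 hKne1] at h4  -- may need adjusting
    have h5 : Real.logb K (m * (P n x / 4)) = Real.logb K (m / 4) + Real.logb K (P n x) := by
      rw [show m * (P n x / 4) = (m/4) * P n x by ring]
      exact Real.logb_mul (by positivity) (ne_of_gt hx)
    have h6 : Real.logb K (P n x)⁻¹ = - Real.logb K (P n x) := Real.logb_inv _ _
    have h7 : Real.logb K ((m/4)⁻¹) = - Real.logb K (m/4) := Real.logb_inv _ _
    rw [h5] at h4
    rw [hC0, h7, h6]
    linarith
  refine ⟨φ, ?_, hnil, ?_, ?_⟩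
  · intro n x y hxy
    exact hpf n x y (hxy ▸ List.prefix_refl _)
  · intro n x y hxy
    rw [hpf n x y hxy]
  · -- limsup bound via squeeze
    have key : Filter.Tendsto (fun n => prob (P n) {x | (n:ℝ) * R < strCost c (φ n x)})
        Filter.atTop (nhds 0) := by
      apply squeeze_zero' (Filter.Eventually.of_forall fun n => prob_nonneg (hP0 n) _) _ hβ
      -- eventual inclusion
      have hεpos : 0 < α * R - β := by linarith
      obtain ⟨N, hN⟩ := exists_nat_gt (C0 / (α * R - β))
      filter_upwards [Filter.eventually_ge_atTop (N + 1)] with n hn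
      apply prob_mono (hP0 n) (hP1 n).summable
      intro x hx hPx
      have hn0 : (0:ℝ) < n := by
        have : (1:ℕ) ≤ n := le_trans (by omega) hn
        exact_mod_cast lt_of_lt_of_le one_pos (by exact_mod_cast this)
      have hnN : (N:ℝ) ≤ n := by exact_mod_cast le_trans (by omega : N ≤ N + 1) hn
      have h1 : (n:ℝ) * R < strCost c (φ n x) := hx
      have h2 := hcost n x hPx
      have h3 : α * ((n:ℝ) * R) < C0 + Real.logb K (P n x)⁻¹ := by
        calc α * ((n:ℝ) * R) ≤ α * strCost c (φ n x) := by nlinarith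
          _ < _ := h2
      have h4 : C0 < (n:ℝ) * (α * R - β) := by
        calc C0 ≤ (C0 / (α * R - β)) * (α * R - β) := by
              rw [div_mul_cancel₀ _ (ne_of_gt hεpos)]
          _ < (N:ℝ) * (α * R - β) := mul_lt_mul_of_pos_right hN hεpos
          _ ≤ (n:ℝ) * (α * R - β) := by nlinarith
      have h5 : (n:ℝ) * β < Real.logb K (P n x)⁻¹ := by nlinarith
      show β < (1 / (n:ℝ)) * Real.logb K (P n x)⁻¹
      rw [show β = (1 / (n:ℝ)) * ((n:ℝ) * β) by field_simp]
      apply mul_lt_mul_of_pos_left h5 (by positivity)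
    exact le_of_eq key.limsup_eq


lemma converse_part {U : Type*} [Fintype U] {K : ℕ} (hK : 2 ≤ K)
    (c : U → ℝ) {α : ℝ} (hα : 0 < α)
    (hroot : ∑ u : U, (K : ℝ) ^ (-(α * c u)) = 1)
    (𝒳 : ℕ → Type) [∀ n, Countable (𝒳 n)]
    (P : ∀ n, 𝒳 n → ℝ) (hP0 : ∀ n x, 0 ≤ P n x) (hP1 : ∀ n, HasSum (P n) 1)
    {R : ℝ} (φ : ∀ n, 𝒳 n → List U)
    (hinj : ∀ n, Function.Injective (φ n)) (hnil : ∀ n x, φ n x ≠ [])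
    (hpf : ∀ n x y, φ n x <+: φ n y → φ n x = φ n y)
    (hls : Filter.limsup (fun n => prob (P n) {x | (n : ℝ) * R < strCost c (φ n x)})
      Filter.atTop ≤ 0)
    {ε : ℝ} (hε : 0 < ε) :
    Filter.Tendsto
      (fun n => prob (P n) {x | α * R + ε < (1 / (n : ℝ)) * Real.logb K (P n x)⁻¹})
      Filter.atTop (nhds 0) := by
  classical
  have hK1 : (1:ℝ) < K := by exact_mod_cast hK.trans_lt' one_lt_two
  have hK0 : (0:ℝ) < K := lt_trans one_pos hK1
  have hKne1 : (K:ℝ) ≠ 1 := ne_of_gt hK1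
  set q : U → ℝ := fun u => (K : ℝ) ^ (-(α * c u)) with hqdef
  have hq : ∀ u, 0 < q u := fun u => Real.rpow_pos_of_pos hK0 _
  have hsum : ∑ u, q u = 1 := hroot
  set β : ℝ := α * R + ε with hβ
  -- Kraft inequality for each n
  have kraft : ∀ n (s : Finset (𝒳 n)), ∑ x ∈ s, wt q (φ n x) ≤ 1 := by
    intro n s
    have himg : ∑ x ∈ s, wt q (φ n x) = ∑ t ∈ s.image (φ n), wt q t :=
      (Finset.sum_image (fun x _ y _ h => hinj n h)).symm
    rw [himg]
    apply kraft_finset q hq hsum (∑ t ∈ s.image (φ n), t.length) _ le_rfl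
    intro t1 ht1 t2 ht2 hpre
    obtain ⟨x, -, rfl⟩ := Finset.mem_image.1 ht1
    obtain ⟨y, -, rfl⟩ := Finset.mem_image.1 ht2
    exact hpf n x y hpre
  have hsw : ∀ n, Summable (fun x : 𝒳 n => wt q (φ n x)) := fun n =>
    summable_of_sum_le (fun x => (wt_pos hq _).le) (kraft n)
  have htw : ∀ n, ∑' x : 𝒳 n, wt q (φ n x) ≤ 1 := fun n =>
    Summable.tsum_le_of_sum_le (hsw n) (kraft n)
  -- probability of the cost event tends to zero
  have hcost0 : Filter.Tendsto (fun n => prob (P n) {x | (n : ℝ) * R < strCost c (φ n x)})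
      Filter.atTop (nhds 0) := by
    have hb : Filter.IsBoundedUnder (· ≤ ·) Filter.atTop
        (fun n => prob (P n) {x | (n : ℝ) * R < strCost c (φ n x)}) :=
      Filter.isBoundedUnder_of ⟨1, fun n => prob_le_one (hP0 n) (hP1 n) _⟩
    have hb' : Filter.IsBoundedUnder (· ≥ ·) Filter.atTop
        (fun n => prob (P n) {x | (n : ℝ) * R < strCost c (φ n x)}) :=
      Filter.isBoundedUnder_of ⟨0, fun n => prob_nonneg (hP0 n) _⟩
    refine tendsto_of_le_liminf_of_limsup_le ?_ hls hb hb'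
    refine Filter.le_liminf_of_le hb.isCoboundedUnder_flip
      (by filter_upwards using fun n => prob_nonneg (hP0 n) _)
  -- the geometric term tends to zero
  have hgeo : Filter.Tendsto (fun n : ℕ => ((K:ℝ) ^ (-ε)) ^ n) Filter.atTop (nhds 0) := by
    apply tendsto_pow_atTop_nhds_zero_of_lt_one
    · positivity
    · exact Real.rpow_lt_one_of_one_lt_of_neg hK1 (by linarith)
  -- key bound for n ≥ 1
  have key : ∀ n : ℕ, 1 ≤ n →
      prob (P n) {x | β < (1 / (n : ℝ)) * Real.logb K (P n x)⁻¹}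
        ≤ prob (P n) {x | (n : ℝ) * R < strCost c (φ n x)} + ((K:ℝ) ^ (-ε)) ^ n := by
    intro n hn
    have hn0 : (0:ℝ) < n := by exact_mod_cast hn
    set g : 𝒳 n → ℝ := fun x =>
      (K:ℝ) ^ ((n:ℝ) * (α * R) - (n:ℝ) * β) * wt q (φ n x) with hg
    have hg0 : ∀ x, 0 ≤ g x := fun x => by
      have := (wt_pos hq (φ n x)).le
      have : (0:ℝ) ≤ (K:ℝ) ^ ((n:ℝ) * (α * R) - (n:ℝ) * β) := (Real.rpow_pos_of_pos hK0 _).le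
      positivity
    have hsg : Summable g := (hsw n).mul_left _
    -- pointwise bound
    have hpt : ∀ x, ({x | β < (1 / (n : ℝ)) * Real.logb K (P n x)⁻¹}).indicator (P n) x
        ≤ ({x | (n : ℝ) * R < strCost c (φ n x)}).indicator (P n) x + g x := by
      intro x
      by_cases hx : x ∈ {x | β < (1 / (n : ℝ)) * Real.logb K (P n x)⁻¹}
      · rw [Set.indicator_of_mem hx]
        by_cases hcx : x ∈ {x | (n : ℝ) * R < strCost c (φ n x)}
        · rw [Set.indicator_of_mem hcx]
          have := hg0 x
          linarith
        · rw [Set.indicator_of_notMem hcx]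
          rw [zero_add]
          -- here strCost ≤ n R
          have hcle : strCost c (φ n x) ≤ (n:ℝ) * R := not_lt.1 hcx
          rcases eq_or_lt_of_le (hP0 n x) with hPx | hPx
          · rw [← hPx]; exact hg0 x
          · -- P n x < K ^ (-(n β))
            have h1 : (n:ℝ) * β < Real.logb K (P n x)⁻¹ := by
              have hx' : β < (1 / (n : ℝ)) * Real.logb K (P n x)⁻¹ := hx
              have := mul_lt_mul_of_pos_left hx' hn0
              calc (n:ℝ) * β < (n:ℝ) * ((1 / (n : ℝ)) * Real.logb K (P n x)⁻¹) := this
                _ = Real.logb K (P n x)⁻¹ := by field_simp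
            have h2 : Real.logb K (P n x) < -((n:ℝ) * β) := by
              have := Real.logb_inv (b := (K:ℝ)) (P n x)
              -- logb K (P n x)⁻¹ = - logb K (P n x)
              rw [this] at h1  -- may need adjusting
              linarith
            have h3 : P n x < (K:ℝ) ^ (-((n:ℝ) * β)) := by
              calc P n x = (K:ℝ) ^ (Real.logb K (P n x)) := (Real.rpow_logb hK0 hKne1 hPx).symm
                _ < _ := by
                    rw [Real.rpow_lt_rpow_left_iff hK1]
                    exact h2
            have h4 : ((K:ℝ) ^ (-((n:ℝ) * β)) : ℝ) ≤ g x := by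
              rw [hg]
              dsimp only
              have h5 : wt q (φ n x) = (K:ℝ) ^ (-(α * strCost c (φ n x))) := wt_eq_rpow hK c α _
              rw [h5, ← Real.rpow_add hK0]
              rw [Real.rpow_le_rpow_left_iff hK1]
              have : α * strCost c (φ n x) ≤ α * ((n:ℝ) * R) := by nlinarith
              linarith
            linarith
      · rw [Set.indicator_of_notMem hx]
        have h1 : (0:ℝ) ≤ ({x | (n : ℝ) * R < strCost c (φ n x)}).indicator (P n) x :=
          Set.indicator_nonneg (fun y _ => hP0 n y) x
        have := hg0 x
        linarith
    -- sum it up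
    have hsum1 : Summable (({x | (n : ℝ) * R < strCost c (φ n x)}).indicator (P n)) :=
      (hP1 n).summable.indicator _
    have hsum2 : Summable (({x | β < (1 / (n : ℝ)) * Real.logb K (P n x)⁻¹}).indicator (P n)) :=
      (hP1 n).summable.indicator _
    calc prob (P n) {x | β < (1 / (n : ℝ)) * Real.logb K (P n x)⁻¹}
        ≤ ∑' x, (({x | (n : ℝ) * R < strCost c (φ n x)}).indicator (P n) x + g x) :=
          Summable.tsum_le_tsum hpt hsum2 (hsum1.add hsg)
      _ = prob (P n) {x | (n : ℝ) * R < strCost c (φ n x)} + ∑' x, g x :=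
          Summable.tsum_add hsum1 hsg
      _ ≤ prob (P n) {x | (n : ℝ) * R < strCost c (φ n x)} + ((K:ℝ) ^ (-ε)) ^ n := by
          gcongr
          rw [hg, tsum_mul_left]
          have h6 : ((K:ℝ) ^ (-ε)) ^ n = (K:ℝ) ^ ((n:ℝ) * (α * R) - (n:ℝ) * β) := by
            rw [← Real.rpow_natCast ((K:ℝ) ^ (-ε)) n, ← Real.rpow_mul hK0.le]
            congr 1
            rw [hβ]
            ring
          rw [h6]
          have h7 : (0:ℝ) < (K:ℝ) ^ ((n:ℝ) * (α * R) - (n:ℝ) * β) := Real.rpow_pos_of_pos hK0 _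
          calc (K:ℝ) ^ ((n:ℝ) * (α * R) - (n:ℝ) * β) * ∑' x, wt q (φ n x)
              ≤ (K:ℝ) ^ ((n:ℝ) * (α * R) - (n:ℝ) * β) * 1 := by
                apply mul_le_mul_of_nonneg_left (htw n) h7.le
            _ = _ := mul_one _
  -- conclude by squeezing
  apply squeeze_zero' (Filter.Eventually.of_forall fun n => prob_nonneg (hP0 n) _)
    (by filter_upwards [Filter.eventually_ge_atTop 1] using key)
  rw [show (0:ℝ) = 0 + 0 by norm_num]
  exact Filter.Tendsto.add hcost0 hgeo


/-- `R(0|X) = H̄(X)/α_c`, where `H̄(X)` is the spectral sup-entropy rate. -/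
theorem zero_achievable_overflow_threshold {U : Type*} [Fintype U] (K : ℕ) (hK : 2 ≤ K)
    (hcard : Fintype.card U = K) (c : U → ℝ) (hc : ∀ u, 0 < c u)
    (α : ℝ) (hα : 0 < α) (hroot : ∑ u : U, (K : ℝ) ^ (-(α * c u)) = 1)
    (𝒳 : ℕ → Type) [∀ n, Countable (𝒳 n)]
    (P : ∀ n, 𝒳 n → ℝ) (hP0 : ∀ n x, 0 ≤ P n x) (hP1 : ∀ n, HasSum (P n) 1) :
    sInf {R : ℝ | 0 < R ∧ ∃ φ : ∀ n, 𝒳 n → List U,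
        (∀ n, Function.Injective (φ n)) ∧ (∀ n x, φ n x ≠ []) ∧
        (∀ n x y, φ n x <+: φ n y → φ n x = φ n y) ∧
        Filter.limsup (fun n => prob (P n) {x | (n : ℝ) * R < strCost c (φ n x)})
          Filter.atTop ≤ 0}
      = (1 / α) *
        sInf {β : ℝ |
          Filter.Tendsto
            (fun n => prob (P n) {x | β < (1 / (n : ℝ)) * Real.logb K (P n x)⁻¹})
            Filter.atTop (nhds 0)} := by
  classical
  letI : LinearOrder U := LinearOrder.lift' (Fintype.equivFin U) (Fintype.equivFin U).injective
  have hK1 : (1:ℝ) < K := by exact_mod_cast hK.trans_lt' one_lt_two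
  set A : Set ℝ := {R : ℝ | 0 < R ∧ ∃ φ : ∀ n, 𝒳 n → List U,
      (∀ n, Function.Injective (φ n)) ∧ (∀ n x, φ n x ≠ []) ∧
      (∀ n x y, φ n x <+: φ n y → φ n x = φ n y) ∧
      Filter.limsup (fun n => prob (P n) {x | (n : ℝ) * R < strCost c (φ n x)})
        Filter.atTop ≤ 0} with hA
  set B : Set ℝ := {β : ℝ |
      Filter.Tendsto
        (fun n => prob (P n) {x | β < (1 / (n : ℝ)) * Real.logb K (P n x)⁻¹})
        Filter.atTop (nhds 0)} with hB
  -- every element of B is nonnegative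
  have hB0 : ∀ β ∈ B, 0 ≤ β := by
    intro β hβ
    by_contra hcon
    push_neg at hcon
    have hall : ∀ n : ℕ, prob (P n) {x | β < (1 / (n : ℝ)) * Real.logb K (P n x)⁻¹} = 1 := by
      intro n
      have huniv : {x : 𝒳 n | β < (1 / (n : ℝ)) * Real.logb K (P n x)⁻¹} = Set.univ := by
        ext x
        simp only [Set.mem_setOf_eq, Set.mem_univ, iff_true]
        have h1 : 0 ≤ (1 / (n : ℝ)) := by positivity
        have h2 : 0 ≤ Real.logb K (P n x)⁻¹ := by
          rcases eq_or_lt_of_le (hP0 n x) with h | h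
          · rw [← h]
            simp
          · have hle1 : P n x ≤ 1 := by
              have := le_hasSum (hP1 n) x (fun y _ => hP0 n y)
              exact this
            apply Real.logb_nonneg hK1
            rw [le_inv_comm₀] <;> first | exact h | simpa using hle1 | norm_num
        nlinarith
      rw [huniv]
      unfold prob
      rw [Set.indicator_univ]
      exact (hP1 n).tsum_eq
    rw [hB] at hβ
    have : Filter.Tendsto (fun _ : ℕ => (1:ℝ)) Filter.atTop (nhds 0) := by
      have := hβ.congr' (by filter_upwards using hall)
      exact this
    have h10 : (0:ℝ) = 1 := tendsto_nhds_unique this tendsto_const_nhds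
    norm_num at h10
  have hBbdd : BddBelow B := ⟨0, hB0⟩
  -- converse: achievable rates map into B
  have hconv : ∀ R ∈ A, ∀ ε > (0:ℝ), α * R + ε ∈ B := by
    rintro R ⟨hRpos, φ, hinj, hnil, hpf, hls⟩ ε hε
    exact converse_part hK c hα hroot 𝒳 P hP0 hP1 φ hinj hnil hpf hls hε
  -- direct: anything strictly above sInf B / α is in A
  have hdir : ∀ β ∈ B, ∀ R : ℝ, 0 < R → β < α * R → R ∈ A := by
    intro β hβ R hRpos hβR
    obtain ⟨φ, h1, h2, h3, h4⟩ :=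
      direct_part hK hcard c hα hroot 𝒳 P hP0 hP1 hRpos hβR hβ
    exact ⟨hRpos, φ, h1, h2, h3, h4⟩
  rcases B.eq_empty_or_nonempty with hBe | hBne
  · -- B empty forces A empty
    have hAe : A = ∅ := by
      rw [Set.eq_empty_iff_forall_notMem]
      intro R hR
      have := hconv R hR 1 one_pos
      rw [hBe] at this
      exact this
    rw [hAe, hBe, Real.sInf_empty, mul_zero]
  · set H : ℝ := sInf B with hH
    have hH0 : 0 ≤ H := le_csInf hBne hB0
    -- membership of H/α + ε in A for each ε > 0
    have hmem : ∀ ε : ℝ, 0 < ε → H / α + ε ∈ A := by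
      intro ε hε
      have h1 : H < H + α * ε := by nlinarith
      obtain ⟨β, hβB, hβlt⟩ := exists_lt_of_csInf_lt hBne h1
      have hRpos : 0 < H / α + ε := by positivity
      apply hdir β hβB _ hRpos
      calc β < H + α * ε := hβlt
        _ = α * (H / α + ε) := by field_simp
    have hAne : A.Nonempty := ⟨H / α + 1, hmem 1 one_pos⟩
    have hAbdd : BddBelow A := ⟨0, fun R hR => hR.1.le⟩
    -- lower bound for A
    have hlow : ∀ R ∈ A, H / α ≤ R := by
      intro R hR
      have h1 : H ≤ α * R := by
        apply le_of_forall_pos_le_add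
        intro ε hε
        exact csInf_le hBbdd (hconv R hR ε hε)
      rw [div_le_iff₀ hα]
      linarith [h1]
    have h1 : H / α ≤ sInf A := le_csInf hAne hlow
    have h2 : sInf A ≤ H / α := by
      apply le_of_forall_pos_le_add
      intro ε hε
      exact csInf_le hAbdd (hmem ε hε)
    have : sInf A = H / α := le_antisymm h2 h1
    rw [this, hH]
    ring
end
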